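/- arXiv:2309.14441 — 6 statements merged into one kernel-verified Lean document; each statement's English description precedes it below -/
import Mathlib

section
/- Let (u_n) be a real sequence, and let c > 0, α ≥ 0 and d > 1 be real constants such that u_n is asymptotically equivalent to c · d^n · n^(−α) as n → ∞ (i.e., the ratio tends to 1). Then the partial sums satisfy: ∑_{k=1}^{n} u_k is asymptotically equivalent to c · (d/(d−1)) · d^n · n^(−α) as n → ∞. -/
open Filter Finset Topology

theorem sum_isEquivalent_of_isEquivalent_geom
    (u : ℕ → ℝ) (c α d : ℝ) (hc : 0 < c) (hα : 0 ≤ α) (hd : 1 < d)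
    (hu : Asymptotics.IsEquivalent atTop u
      (fun n => c * d ^ n * (n : ℝ) ^ (-α))) :
    Asymptotics.IsEquivalent atTop
      (fun n => ∑ k ∈ Finset.Icc 1 n, u k)
      (fun n => c * (d / (d - 1)) * d ^ n * (n : ℝ) ^ (-α)) := by
  have hd0 : (0:ℝ) < d := lt_trans one_pos hd
  have hd1 : d - 1 ≠ 0 := sub_ne_zero_of_ne hd.ne'
  set v : ℕ → ℝ := fun n => c * d ^ n * (n : ℝ) ^ (-α) with hv
  set w : ℕ → ℝ := fun n => c * (d / (d - 1)) * d ^ n * (n : ℝ) ^ (-α) with hw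
  set u' : ℕ → ℝ := fun k => u (k + 1) with hu'
  set v' : ℕ → ℝ := fun k => v (k + 1) with hv'
  have hv'pos : ∀ k, 0 < v' k := by
    intro k
    have : (0:ℝ) < ((k:ℝ) + 1) := by positivity
    simp only [hv', hv]
    push_cast
    positivity
  -- v tends to infinity
  have hvtop : Tendsto v atTop atTop := by
    set m : ℕ := ⌈α⌉₊ with hm
    have h0 : Tendsto (fun n : ℕ => (n:ℝ) ^ m / d ^ n) atTop (𝓝 0) :=
      tendsto_pow_const_div_const_pow_of_one_lt m hd
    have hpos : ∀ᶠ n : ℕ in atTop, (n:ℝ) ^ m / d ^ n ∈ Set.Ioi (0:ℝ) := by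
      filter_upwards [eventually_ge_atTop 1] with n hn
      have hn' : (0:ℝ) < (n:ℝ) := by exact_mod_cast Nat.pos_of_ne_zero (by omega)
      exact Set.mem_Ioi.mpr (by positivity)
    have h1 : Tendsto (fun n : ℕ => (n:ℝ) ^ m / d ^ n) atTop (𝓝[>] 0) :=
      tendsto_nhdsWithin_of_tendsto_nhds_of_eventually_within _ h0 hpos
    have h2 : Tendsto (fun n : ℕ => d ^ n / (n:ℝ) ^ m) atTop atTop := by
      have := h1.inv_tendsto_nhdsGT_zero
      refine this.congr fun n => ?_
      simp [inv_div]
    have h3 : Tendsto (fun n : ℕ => c * (d ^ n / (n:ℝ) ^ m)) atTop atTop :=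
      h2.const_mul_atTop hc
    refine tendsto_atTop_mono' atTop ?_ h3
    filter_upwards [eventually_ge_atTop 1] with n hn
    have hn1 : (1:ℝ) ≤ (n:ℝ) := by exact_mod_cast hn
    have hn0 : (0:ℝ) ≤ (n:ℝ) := le_trans zero_le_one hn1
    have hkey : ((n:ℝ) ^ m)⁻¹ ≤ (n:ℝ) ^ (-α) := by
      have e1 : ((n:ℝ) ^ m)⁻¹ = (n:ℝ) ^ (-(m:ℝ)) := by
        rw [Real.rpow_neg hn0, Real.rpow_natCast]
      rw [e1]
      exact Real.rpow_le_rpow_of_exponent_le hn1 (neg_le_neg (Nat.le_ceil α))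
    calc c * (d ^ n / (n:ℝ) ^ m) = c * d ^ n * ((n:ℝ) ^ m)⁻¹ := by ring
      _ ≤ c * d ^ n * (n:ℝ) ^ (-α) := by
          have : (0:ℝ) ≤ c * d ^ n := by positivity
          exact mul_le_mul_of_nonneg_left hkey this
  have hv'top : Tendsto v' atTop atTop := by
    have := hvtop.comp (tendsto_add_atTop_nat 1)
    exact this
  -- partial sums of v'
  set T : ℕ → ℝ := fun n => ∑ k ∈ range n, v' k with hT
  have hTtop : Tendsto T atTop atTop := by
    have h1 : ∀ n, v' n ≤ T (n + 1) := fun n =>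
      Finset.single_le_sum (fun i _ => (hv'pos i).le) (self_mem_range_succ n)
    have h2 : Tendsto (fun n => T (n + 1)) atTop atTop :=
      tendsto_atTop_mono h1 hv'top
    exact (tendsto_add_atTop_iff_nat 1).mp h2
  -- Step 1: sums of u' equivalent to sums of v'
  have hlo : (fun k => u' k - v' k) =o[atTop] v' := by
    exact (hu.isLittleO).comp_tendsto (tendsto_add_atTop_nat 1)
  have hsum1 : (fun n => (∑ k ∈ range n, u' k) - T n) =o[atTop] T := by
    have := hlo.sum_range (fun i => (hv'pos i).le) hTtop
    refine this.congr_left fun n => ?_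
    simp [Finset.sum_sub_distrib, hT]
  -- Step 2: telescoping for w
  set Δ : ℕ → ℝ := fun k => w (k + 1) - w k with hΔ
  have hL : (fun k => v' k - Δ k) =o[atTop] v' := by
    rw [Asymptotics.isLittleO_iff_tendsto'
      (by filter_upwards with k hk; exact absurd hk (hv'pos k).ne')]
    have hratio : Tendsto (fun k : ℕ => ((k:ℝ) + 1) / (k:ℝ)) atTop (𝓝 1) := by
      have h1 : Tendsto (fun k : ℕ => 1 + ((k:ℝ))⁻¹) atTop (𝓝 (1 + 0)) :=
        tendsto_const_nhds.add (tendsto_inv_atTop_zero.comp tendsto_natCast_atTop_atTop)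
      rw [add_zero] at h1
      refine h1.congr' ?_
      filter_upwards [eventually_ge_atTop 1] with k hk
      have hk0 : ((k:ℝ)) ≠ 0 := by
        have : (0:ℝ) < (k:ℝ) := by exact_mod_cast Nat.pos_of_ne_zero (by omega)
        exact this.ne'
      field_simp
    have hr2 : Tendsto (fun k : ℕ => (((k:ℝ) + 1) / (k:ℝ)) ^ α) atTop (𝓝 1) := by
      have := hratio.rpow_const (Or.inr hα)
      simpa using this
    have hφ : Tendsto (fun k : ℕ => (1 / (d - 1)) * ((((k:ℝ) + 1) / (k:ℝ)) ^ α - 1))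
        atTop (𝓝 0) := by
      have := (hr2.sub_const 1).const_mul (1 / (d - 1))
      simpa using this
    refine hφ.congr' ?_
    filter_upwards [eventually_ge_atTop 1] with k hk
    have hK : (0:ℝ) < (k:ℝ) := by exact_mod_cast Nat.pos_of_ne_zero (by omega)
    have hK1 : (0:ℝ) < (k:ℝ) + 1 := by positivity
    have hA : (0:ℝ) < (k:ℝ) ^ α := Real.rpow_pos_of_pos hK α
    have hB : (0:ℝ) < ((k:ℝ) + 1) ^ α := Real.rpow_pos_of_pos hK1 α
    have hdiv : (((k:ℝ) + 1) / (k:ℝ)) ^ α = ((k:ℝ) + 1) ^ α / (k:ℝ) ^ α :=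
      Real.div_rpow hK1.le hK.le α
    have hnegk : (k:ℝ) ^ (-α) = ((k:ℝ) ^ α)⁻¹ := Real.rpow_neg hK.le α
    have hnegk1 : ((k:ℝ) + 1) ^ (-α) = (((k:ℝ) + 1) ^ α)⁻¹ := Real.rpow_neg hK1.le α
    have hcast : ((k + 1 : ℕ) : ℝ) = (k:ℝ) + 1 := by push_cast; ring
    simp only [hv', hv, hw, hΔ, hdiv, hcast, hnegk, hnegk1, pow_succ]
    have hdk : (0:ℝ) < d ^ k := by positivity
    field_simp
    ring
  have hsum2 : (fun n => T n - (w n - w 0)) =o[atTop] T := by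
    have := hL.sum_range (fun i => (hv'pos i).le) hTtop
    refine this.congr_left fun n => ?_
    simp [Finset.sum_sub_distrib, hT, Finset.sum_range_sub (f := w)]
    exact Finset.sum_range_sub w n
  have hconst : (fun _ : ℕ => w 0) =o[atTop] T := by
    rw [Asymptotics.isLittleO_const_left]
    right
    have : Tendsto (fun n => |T n|) atTop atTop := tendsto_abs_atTop_atTop.comp hTtop
    simpa [Real.norm_eq_abs, Function.comp_def] using this
  have hTw : (fun n => T n - w n) =o[atTop] T := by
    have := hsum2.sub hconst
    refine this.congr_left fun n => ?_
    ring
  have hwT : Asymptotics.IsEquivalent atTop w T := by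
    have := hTw.neg_left
    refine this.congr_left fun n => ?_
    simp only [Pi.sub_apply]
    ring
  have hTw' : Asymptotics.IsEquivalent atTop T w := hwT.symm
  -- Conclusion
  have hgoal_eq : (fun n => ∑ k ∈ Finset.Icc 1 n, u k)
      = fun n => ∑ k ∈ range n, u' k := by
    funext n
    rw [← Finset.Ico_add_one_right_eq_Icc, Finset.sum_Ico_eq_sum_range]
    simp [hu', add_comm]
  rw [hgoal_eq]
  have h2 : (fun n => (∑ k ∈ range n, u' k) - w n) =o[atTop] T := by
    have := hsum1.add hTw
    refine this.congr_left fun n => ?_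
    ring
  have h3 : (fun n => (∑ k ∈ range n, u' k) - w n) =o[atTop] w :=
    h2.trans_isBigO hTw'.isBigO
  exact h3
end

section
/- Let (a_n) be a real sequence and let c > 0 and d > 1 be real constants such that a_n is asymptotically equivalent to c · d^n · n^(−3/2) as n → ∞. Define b_n = ∑_{i=1}^{n} a_i. Then b_n is asymptotically equivalent to c · (d/(d−1)) · d^n · n^(−3/2) as n → ∞. -/
open Filter Finset
open scoped Topology

private lemma geom_tail_bound {F : ℕ → ℝ} {r : ℝ} (hr0 : 0 ≤ r) (hr : r < 1) (N : ℕ)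
    (hFnn : ∀ i, N ≤ i → 0 ≤ F i)
    (hrat : ∀ i, N ≤ i → F i ≤ r * F (i + 1)) :
    ∀ n, N ≤ n → ∑ i ∈ Icc N n, F i ≤ F n / (1 - r) := by
  intro n hn
  have h1r : (0:ℝ) < 1 - r := by linarith
  induction n, hn using Nat.le_induction with
  | base =>
      rw [Finset.Icc_self, Finset.sum_singleton, le_div_iff₀ h1r]
      nlinarith [hFnn N le_rfl, mul_nonneg hr0 (hFnn N le_rfl)]
  | succ n hn ih =>
      rw [Finset.sum_Icc_succ_top (le_trans hn (Nat.le_succ n))]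
      have h1 : F n ≤ r * F (n + 1) := hrat n hn
      have h2 : F n / (1 - r) ≤ r * F (n + 1) / (1 - r) :=
        by gcongr
      have h3 : r * F (n + 1) / (1 - r) + F (n + 1) = F (n + 1) / (1 - r) := by
        field_simp; ring
      linarith

private lemma sum_isLittleO_aux {F h : ℕ → ℝ} {C : ℝ} (hC : 0 < C) {N : ℕ}
    (hFpos : ∀ i, N ≤ i → 0 < F i)
    (hFtop : Tendsto F atTop atTop)
    (hsum : ∀ M, N ≤ M → ∀ n, M ≤ n → ∑ i ∈ Icc M n, F i ≤ C * F n)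
    (hh : h =o[atTop] F) :
    (fun n => ∑ i ∈ Icc 1 n, h i) =o[atTop] F := by
  rw [Asymptotics.isLittleO_iff]
  intro ε hε
  have hδ : 0 < ε / (2 * C) := by positivity
  obtain ⟨M0, hM0⟩ := Filter.eventually_atTop.1 (hh.def hδ)
  set M := max M0 N with hMdef
  have hMN : N ≤ M := le_max_right _ _
  set K := ∑ i ∈ Icc 1 M, ‖h i‖ with hKdef
  have key : ∀ n, M ≤ n → ‖∑ i ∈ Icc 1 n, h i‖ ≤ K + ε / 2 * F n := by
    intro n hn
    have hsplit : ∑ i ∈ Ioc 0 M, h i + ∑ i ∈ Ioc M n, h i = ∑ i ∈ Ioc 0 n, h i :=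
      Finset.sum_Ioc_consecutive _ (Nat.zero_le M) hn
    have hIcc : ∀ m : ℕ, Icc 1 m = Ioc 0 m := fun m => Finset.Icc_add_one_left_eq_Ioc 0 m
    rw [hIcc n, ← hsplit]
    have hb1 : ‖∑ i ∈ Ioc 0 M, h i‖ ≤ K := by
      rw [hKdef, hIcc M]; exact norm_sum_le _ _
    have hb2 : ‖∑ i ∈ Ioc M n, h i‖ ≤ ε / (2 * C) * ∑ i ∈ Ioc M n, F i := by
      calc ‖∑ i ∈ Ioc M n, h i‖ ≤ ∑ i ∈ Ioc M n, ‖h i‖ := norm_sum_le _ _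
        _ ≤ ∑ i ∈ Ioc M n, ε / (2 * C) * F i := by
            refine Finset.sum_le_sum fun i hi => ?_
            have hiM : M < i := (Finset.mem_Ioc.1 hi).1
            have hiF := hFpos i (le_trans hMN hiM.le)
            have := hM0 i (le_trans (le_max_left _ _) hiM.le)
            rwa [Real.norm_of_nonneg hiF.le] at this
        _ = ε / (2 * C) * ∑ i ∈ Ioc M n, F i := by rw [Finset.mul_sum]
    have hb3 : ∑ i ∈ Ioc M n, F i ≤ C * F n := by
      rcases eq_or_lt_of_le hn with rfl | hlt
      · simp only [Finset.Ioc_self, Finset.sum_empty]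
        exact mul_nonneg hC.le (hFpos _ hMN).le
      · have : Ioc M n = Icc (M + 1) n := (Finset.Icc_add_one_left_eq_Ioc M n).symm
        rw [this]
        exact hsum (M + 1) (le_trans hMN (Nat.le_succ M)) n hlt
    have hFn : 0 < F n := hFpos n (le_trans hMN hn)
    have : ε / (2 * C) * ∑ i ∈ Ioc M n, F i ≤ ε / 2 * F n := by
      have h1 : ε / (2 * C) * ∑ i ∈ Ioc M n, F i ≤ ε / (2 * C) * (C * F n) :=
        mul_le_mul_of_nonneg_left hb3 hδ.le
      have h2 : ε / (2 * C) * (C * F n) = ε / 2 * F n := by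
        field_simp
      linarith
    calc ‖∑ i ∈ Ioc 0 M, h i + ∑ i ∈ Ioc M n, h i‖
        ≤ ‖∑ i ∈ Ioc 0 M, h i‖ + ‖∑ i ∈ Ioc M n, h i‖ := norm_add_le _ _
      _ ≤ K + ε / 2 * F n := by linarith
  have hev : ∀ᶠ n in atTop, M ≤ n ∧ 2 * K / ε ≤ F n ∧ N ≤ n :=
    (eventually_ge_atTop M).and ((hFtop.eventually_ge_atTop _).and (eventually_ge_atTop N))
  filter_upwards [hev] with n ⟨hn1, hn2, hn3⟩
  have hFn : 0 < F n := hFpos n hn3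
  have hK : K ≤ ε / 2 * F n := by
    have := mul_le_mul_of_nonneg_left hn2 (le_of_lt (by positivity : (0:ℝ) < ε / 2))
    have h2 : ε / 2 * (2 * K / ε) = K := by field_simp
    linarith
  have := key n hn1
  rw [Real.norm_of_nonneg hFn.le]
  linarith

theorem partial_sums_isEquivalent
    (a : ℕ → ℝ) (c d : ℝ) (hc : 0 < c) (hd : 1 < d)
    (ha : Asymptotics.IsEquivalent atTop a
      (fun n => c * d ^ n * (n : ℝ) ^ (-(3 / 2 : ℝ))))
    (b : ℕ → ℝ) (hb : ∀ n, b n = ∑ i ∈ Finset.Icc 1 n, a i) :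
    Asymptotics.IsEquivalent atTop b
      (fun n => c * (d / (d - 1)) * d ^ n * (n : ℝ) ^ (-(3 / 2 : ℝ))) := by
  have hd0 : (0:ℝ) < d := lt_trans one_pos hd
  set F : ℕ → ℝ := fun n => c * d ^ n * (n : ℝ) ^ (-(3 / 2 : ℝ)) with hFdef
  set q : ℝ := d / (d - 1) with hqdef
  have hq0 : 0 < q := div_pos hd0 (by linarith)
  set G : ℕ → ℝ := fun n => q * F n with hGdef
  -- positivity of F
  have hFpos : ∀ i : ℕ, 1 ≤ i → 0 < F i := by
    intro i hi
    have hi0 : (0:ℝ) < (i:ℝ) := by exact_mod_cast hi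
    exact mul_pos (mul_pos hc (pow_pos hd0 i)) (Real.rpow_pos_of_pos hi0 _)
  -- ratio tendsto
  have hratio : Tendsto (fun i : ℕ => F i / F (i + 1)) atTop (𝓝 d⁻¹) := by
    have h1 : Tendsto (fun i : ℕ => (i:ℝ)⁻¹) atTop (𝓝 0) :=
      tendsto_inv_atTop_zero.comp tendsto_natCast_atTop_atTop
    have h2 : Tendsto (fun i : ℕ => (1 + (i:ℝ)⁻¹) ^ ((3:ℝ)/2)) atTop (𝓝 1) := by
      have h1' : Tendsto (fun i : ℕ => 1 + (i:ℝ)⁻¹) atTop (𝓝 (1:ℝ)) := by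
        simpa using h1.const_add 1
      have hcont := (Real.continuousAt_rpow_const 1 ((3:ℝ)/2) (Or.inl one_ne_zero)).tendsto
      simpa [Real.one_rpow, Function.comp_def] using hcont.comp h1'
    have h3 : Tendsto (fun i : ℕ => d⁻¹ * (1 + (i:ℝ)⁻¹) ^ ((3:ℝ)/2)) atTop (𝓝 d⁻¹) := by
      simpa using h2.const_mul d⁻¹
    refine h3.congr' ?_
    filter_upwards [eventually_ge_atTop 1] with i hi
    have hi0 : (0:ℝ) < (i:ℝ) := by exact_mod_cast hi
    have hi10 : (0:ℝ) < (i:ℝ) + 1 := by linarith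
    have hcast : ((i + 1 : ℕ) : ℝ) = (i:ℝ) + 1 := by push_cast; ring
    have hr1 : ((i:ℝ)) ^ (-(3 / 2 : ℝ)) = (((i:ℝ)) ^ ((3:ℝ)/2))⁻¹ := by
      rw [← Real.rpow_neg hi0.le]
    have hr2 : (((i:ℝ)+1)) ^ (-(3 / 2 : ℝ)) = ((((i:ℝ)+1)) ^ ((3:ℝ)/2))⁻¹ := by
      rw [← Real.rpow_neg hi10.le]
    have hp1 : (0:ℝ) < ((i:ℝ)) ^ ((3:ℝ)/2) := Real.rpow_pos_of_pos hi0 _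
    have hp2 : (0:ℝ) < (((i:ℝ)+1)) ^ ((3:ℝ)/2) := Real.rpow_pos_of_pos hi10 _
    have hdiv : (1 + (i:ℝ)⁻¹) ^ ((3:ℝ)/2) = (((i:ℝ)+1)) ^ ((3:ℝ)/2) / ((i:ℝ)) ^ ((3:ℝ)/2) := by
      rw [← Real.div_rpow hi10.le hi0.le]
      congr 1
      field_simp
    show d⁻¹ * (1 + (i:ℝ)⁻¹) ^ ((3:ℝ)/2) = F i / F (i + 1)
    rw [hFdef]
    simp only [hcast, hr1, hr2, hdiv]
    rw [pow_succ]
    field_simp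
  -- F tends to infinity
  have hFtop : Tendsto F atTop atTop := by
    have h0 : Tendsto (fun n : ℕ => (n:ℝ) ^ 2 / d ^ n) atTop (𝓝 0) :=
      tendsto_pow_const_div_const_pow_of_one_lt 2 hd
    have h0' : Tendsto (fun n : ℕ => (n:ℝ) ^ 2 / d ^ n) atTop (𝓝[>] 0) := by
      refine tendsto_nhdsWithin_of_tendsto_nhds_of_eventually_within _ h0 ?_
      filter_upwards [eventually_ge_atTop 1] with n hn
      have hn0 : (0:ℝ) < (n:ℝ) := by exact_mod_cast hn
      exact div_pos (by positivity) (pow_pos hd0 n)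
    have h1 : Tendsto (fun n : ℕ => d ^ n / (n:ℝ) ^ 2) atTop atTop := by
      have := h0'.inv_tendsto_nhdsGT_zero
      refine this.congr fun n => ?_
      simp [Pi.inv_apply, one_div]
    have h2 : Tendsto (fun n : ℕ => c * (d ^ n / (n:ℝ) ^ 2)) atTop atTop :=
      h1.const_mul_atTop hc
    refine tendsto_atTop_mono' _ ?_ h2
    filter_upwards [eventually_ge_atTop 1] with n hn
    have hn0 : (0:ℝ) < (n:ℝ) := by exact_mod_cast hn
    have hn1 : (1:ℝ) ≤ (n:ℝ) := by exact_mod_cast hn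
    have hle : (n:ℝ) ^ (-(2:ℝ)) ≤ (n:ℝ) ^ (-(3 / 2 : ℝ)) :=
      Real.rpow_le_rpow_of_exponent_le hn1 (by norm_num)
    have heq : (n:ℝ) ^ (-(2:ℝ)) = ((n:ℝ) ^ 2)⁻¹ := by
      rw [Real.rpow_neg hn0.le]
      norm_num
    have : c * (d ^ n / (n:ℝ) ^ 2) = c * d ^ n * (n:ℝ) ^ (-(2:ℝ)) := by
      rw [heq]; ring
    rw [this]
    exact mul_le_mul_of_nonneg_left hle (by positivity)
  -- geometric ratio bound
  set r : ℝ := (d⁻¹ + 1) / 2 with hrdef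
  have hdinv : d⁻¹ < 1 := by
    rw [inv_lt_one_iff₀]; right; exact hd
  have hdinv0 : 0 < d⁻¹ := inv_pos.2 hd0
  have hr1 : r < 1 := by rw [hrdef]; linarith
  have hrgt : d⁻¹ < r := by rw [hrdef]; linarith
  obtain ⟨N0, hN0⟩ := Filter.eventually_atTop.1 (hratio.eventually_le_const hrgt)
  set N : ℕ := max N0 1 with hNdef
  have hNrat : ∀ i, N ≤ i → F i ≤ r * F (i + 1) := by
    intro i hi
    have hle := hN0 i (le_trans (le_max_left _ _) hi)
    have hpos : 0 < F (i + 1) := hFpos (i + 1) (le_trans (le_max_right _ _) (le_trans hi (Nat.le_succ i)))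
    calc F i = F i / F (i + 1) * F (i + 1) := by field_simp
      _ ≤ r * F (i + 1) := mul_le_mul_of_nonneg_right hle hpos.le
  have hC0 : (0:ℝ) < 1 / (1 - r) := by
    have : (0:ℝ) < 1 - r := by linarith
    positivity
  have hsum : ∀ M, N ≤ M → ∀ n, M ≤ n → ∑ i ∈ Icc M n, F i ≤ 1 / (1 - r) * F n := by
    intro M hM n hn
    have := geom_tail_bound (by rw [hrdef]; positivity) hr1 M
      (fun i hi => (hFpos i (le_trans (le_max_right _ _) (le_trans hM hi))).le)
      (fun i hi => hNrat i (le_trans hM hi)) n hn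
    calc ∑ i ∈ Icc M n, F i ≤ F n / (1 - r) := this
      _ = 1 / (1 - r) * F n := by ring
  -- F (i-1) / F i tends to d⁻¹
  have hratio' : Tendsto (fun i : ℕ => F (i - 1) / F i) atTop (𝓝 d⁻¹) := by
    have hsub : Tendsto (fun i : ℕ => i - 1) atTop atTop := tendsto_sub_atTop_nat 1
    have := hratio.comp hsub
    refine this.congr' ?_
    filter_upwards [eventually_ge_atTop 1] with i hi
    have : i - 1 + 1 = i := Nat.succ_pred_eq_of_pos hi
    simp [Function.comp, this]
  -- the increments h
  set h : ℕ → ℝ := fun i => a i - (G i - G (i - 1)) with hhdef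
  have hG0 : G 0 = 0 := by
    rw [hGdef, hFdef]
    simp [Real.zero_rpow (by norm_num : -(3/2 : ℝ) ≠ 0)]
  have htel : ∀ n : ℕ, ∑ i ∈ Icc 1 n, (G i - G (i - 1)) = G n := by
    intro n
    induction n with
    | zero => simp [hG0]
    | succ n ih =>
        rw [Finset.sum_Icc_succ_top (Nat.one_le_iff_ne_zero.2 (Nat.succ_ne_zero n)), ih]
        simp
  have hbG : ∀ n, b n - G n = ∑ i ∈ Icc 1 n, h i := by
    intro n
    rw [hb n, ← htel n, hhdef, ← Finset.sum_sub_distrib]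
  -- h =o F
  have hψ : (fun i => F i - (G i - G (i - 1))) =o[atTop] F := by
    rw [Asymptotics.isLittleO_iff_tendsto']
    · have hlim : Tendsto (fun i : ℕ => 1 - q * (1 - F (i - 1) / F i)) atTop
          (𝓝 (1 - q * (1 - d⁻¹))) := by
        exact (((hratio'.const_sub 1).const_mul q).const_sub 1)
      have hval : 1 - q * (1 - d⁻¹) = 0 := by
        have hd1 : d - 1 ≠ 0 := by intro hcontra; nlinarith
        rw [hqdef]
        field_simp
        ring
      rw [hval] at hlim
      refine hlim.congr' ?_
      filter_upwards [eventually_ge_atTop 1] with i hi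
      have hFi : F i ≠ 0 := (hFpos i hi).ne'
      rw [hGdef]
      field_simp
    · filter_upwards [eventually_ge_atTop 1] with i hi h0
      exact absurd h0 (hFpos i hi).ne'
  have hhF : h =o[atTop] F := by
    have h1 : (fun i => a i - F i) =o[atTop] F := ha.isLittleO
    have : h = fun i => (a i - F i) + (F i - (G i - G (i - 1))) := by
      funext i; rw [hhdef]; ring
    rw [this]
    exact h1.add hψ
  -- apply the summation lemma
  have hsumo : (fun n => ∑ i ∈ Icc 1 n, h i) =o[atTop] F :=
    sum_isLittleO_aux hC0 (fun i hi => hFpos i (le_trans (le_max_right _ _) hi))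
      hFtop hsum hhF
  have hbGo : (fun n => b n - G n) =o[atTop] F := by
    refine hsumo.congr' ?_ (Filter.EventuallyEq.refl _ _)
    filter_upwards with n
    exact (hbG n).symm
  have hGoal : (fun n => b n - G n) =o[atTop] G := by
    rw [hGdef]
    exact (Asymptotics.isLittleO_const_mul_right_iff hq0.ne').2 hbGo
  have hGeq : (fun n : ℕ => c * (d / (d - 1)) * d ^ n * (n : ℝ) ^ (-(3 / 2 : ℝ))) = G := by
    funext n
    simp only [hGdef, hFdef, hqdef]
    ring
  rw [Asymptotics.IsEquivalent, hGeq]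
  exact hGoal
end

section
/- Let (a_n) be a real sequence and let c > 0 and d > 1 be real constants such that a_n is asymptotically equivalent to c · d^n · n^(−3/2) as n → ∞. Then the weighted partial sums satisfy: ∑_{i=1}^{n} i · a_i is asymptotically equivalent to c · (d/(d−1)) · d^n · n^(−1/2) as n → ∞. -/
open Filter Finset Asymptotics Topology

theorem weighted_partial_sums_isEquivalent
    (a : ℕ → ℝ) (c d : ℝ) (hc : 0 < c) (hd : 1 < d)
    (ha : Asymptotics.IsEquivalent atTop a
      (fun n => c * d ^ n * (n : ℝ) ^ (-(3 / 2 : ℝ)))) :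
    Asymptotics.IsEquivalent atTop
      (fun n : ℕ => ∑ i ∈ Finset.Icc 1 n, (i : ℝ) * a i)
      (fun n => c * (d / (d - 1)) * d ^ n * (n : ℝ) ^ (-(1 / 2 : ℝ))) := by
  have hd0 : (0:ℝ) < d := lt_trans one_pos hd
  have hd1 : (0:ℝ) < d - 1 := sub_pos.2 hd
  set x : ℕ → ℝ := fun n => c * d ^ n * (n : ℝ) ^ (-(1 / 2 : ℝ)) with hxdef
  have hx0 : x 0 = 0 := by
    simp [hxdef, Real.zero_rpow (by norm_num : -(1/2:ℝ) ≠ 0)]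
  have hxnonneg : ∀ n, 0 ≤ x n := fun n => by
    positivity
  have hxpos : ∀ n, 1 ≤ n → 0 < x n := fun n hn => by
    have : (0:ℝ) < (n:ℝ) := by exact_mod_cast hn
    positivity
  -- x tends to infinity
  have hlo : (fun n : ℕ => ((n:ℝ))^((1/2:ℝ))) =o[atTop] (fun n : ℕ => d ^ n) := by
    have h1 : (fun n : ℕ => ((n:ℝ))) =o[atTop] (fun n : ℕ => d ^ n) := by
      simpa using isLittleO_pow_const_const_pow_of_one_lt (R := ℝ) 1 hd
    refine (IsBigO.trans_isLittleO ?_ h1)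
    rw [isBigO_iff]
    refine ⟨1, ?_⟩
    filter_upwards [eventually_ge_atTop 1] with n hn
    have hn1 : (1:ℝ) ≤ (n:ℝ) := by exact_mod_cast hn
    rw [one_mul, Real.norm_eq_abs, Real.norm_eq_abs, abs_of_nonneg (by positivity),
      abs_of_nonneg (by positivity)]
    calc ((n:ℝ))^((1/2:ℝ)) ≤ ((n:ℝ))^((1:ℝ)) :=
          Real.rpow_le_rpow_of_exponent_le hn1 (by norm_num)
      _ = (n:ℝ) := Real.rpow_one _
  have hxtop : Tendsto x atTop atTop := by
    have hdiv : Tendsto (fun n : ℕ => ((n:ℝ))^((1/2:ℝ)) / d ^ n) atTop (𝓝 0) :=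
      hlo.tendsto_div_nhds_zero
    have hmem : ∀ᶠ n : ℕ in atTop, ((n:ℝ))^((1/2:ℝ)) / d ^ n ∈ Set.Ioi (0:ℝ) := by
      filter_upwards [eventually_ge_atTop 1] with n hn
      have : (0:ℝ) < (n:ℝ) := by exact_mod_cast hn
      exact div_pos (Real.rpow_pos_of_pos this _) (pow_pos hd0 n)
    have hinv : Tendsto (fun n : ℕ => (((n:ℝ))^((1/2:ℝ)) / d ^ n)⁻¹) atTop atTop :=
      (tendsto_nhdsWithin_of_tendsto_nhds_of_eventually_within _ hdiv hmem).inv_tendsto_nhdsGT_zero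
    have heq : ∀ n : ℕ, (((n:ℝ))^((1/2:ℝ)) / d ^ n)⁻¹ = d ^ n * ((n:ℝ))^(-(1/2:ℝ)) := by
      intro n
      rw [Real.rpow_neg (Nat.cast_nonneg n), inv_div, div_eq_mul_inv]
    have := (hinv.congr heq).const_mul_atTop hc
    refine this.congr fun n => by rw [hxdef]; ring
  -- divergence of partial sums of x
  have htop : Tendsto (fun n => ∑ i ∈ range n, x i) atTop atTop := by
    refine tendsto_atTop_mono' atTop ?_ (hxtop.comp (tendsto_sub_atTop_nat 1))
    filter_upwards [eventually_ge_atTop 1] with n hn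
    exact single_le_sum (fun i _ => hxnonneg i)
      (mem_range.2 (by omega : n - 1 < n))
  -- ratio x (n-1) / x n tends to 1/d
  have hq : Tendsto (fun n : ℕ => x (n - 1) / x n) atTop (𝓝 d⁻¹) := by
    have hr : Tendsto (fun n : ℕ => d⁻¹ * ((1 - ((n:ℝ))⁻¹)^(-(1/2:ℝ)))) atTop
        (𝓝 (d⁻¹ * ((1:ℝ))^(-(1/2:ℝ)))) := by
      refine Tendsto.const_mul _ (Filter.Tendsto.rpow ?_ tendsto_const_nhds (Or.inl one_ne_zero))
      have : Tendsto (fun n : ℕ => ((n:ℝ))⁻¹) atTop (𝓝 0) :=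
        tendsto_inv_atTop_zero.comp tendsto_natCast_atTop_atTop
      simpa using (tendsto_const_nhds (x := (1:ℝ))).sub this
    rw [Real.one_rpow, mul_one] at hr
    refine Tendsto.congr' ?_ hr
    filter_upwards [eventually_ge_atTop 2] with n hn
    have hn1 : (1:ℝ) ≤ (n:ℝ) - 1 := by
      have : (2:ℝ) ≤ (n:ℝ) := by exact_mod_cast hn
      linarith
    have hnpos : (0:ℝ) < (n:ℝ) := by positivity
    have hcast : ((n - 1 : ℕ) : ℝ) = (n:ℝ) - 1 := by
      have : 1 ≤ n := by omega
      push_cast [this]; ring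
    have hpow : d ^ n = d ^ (n-1) * d := by
      rw [← pow_succ]
      congr 1
      omega
    have hdivr : ((n:ℝ) - 1) / (n:ℝ) = 1 - ((n:ℝ))⁻¹ := by
      field_simp
    rw [hxdef]
    simp only [hcast, hpow]
    rw [← hdivr, Real.div_rpow (by linarith) (le_of_lt hnpos)]
    have hB : ((n:ℝ))^(-(1/2:ℝ)) ≠ 0 := ne_of_gt (Real.rpow_pos_of_pos hnpos _)
    have hA : (0:ℝ) < ((n:ℝ) - 1)^(-(1/2:ℝ)) := Real.rpow_pos_of_pos (by linarith) _
    field_simp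
  -- the correction sequence f
  set f : ℕ → ℝ := fun i => x i - (d / (d - 1)) * (x i - x (i - 1)) with hfdef
  have hfo : f =o[atTop] x := by
    rw [isLittleO_iff_tendsto' ?_]
    · have h1 : Tendsto (fun n : ℕ => 1 - (d / (d-1)) * (1 - x (n-1) / x n)) atTop
          (𝓝 (1 - (d / (d-1)) * (1 - d⁻¹))) := by
        exact (tendsto_const_nhds.sub
          (Tendsto.const_mul _ (tendsto_const_nhds.sub hq)))
      have h2 : (1:ℝ) - (d / (d-1)) * (1 - d⁻¹) = 0 := by
        field_simp
        ring
      rw [h2] at h1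
      refine Tendsto.congr' ?_ h1
      filter_upwards [eventually_ge_atTop 1] with n hn
      have hxn : x n ≠ 0 := ne_of_gt (hxpos n hn)
      rw [hfdef]
      field_simp
    · filter_upwards [eventually_ge_atTop 1] with n hn h
      exact absurd h (ne_of_gt (hxpos n hn))
  -- telescoping identity
  have key1 : ∀ n : ℕ, ∑ i ∈ range (n+1), f i
      = (∑ i ∈ range (n+1), x i) - (d / (d-1)) * x n := by
    intro n
    have ht : ∑ i ∈ range (n+1), (x i - x (i-1)) = x n := by
      rw [Finset.sum_range_succ']
      simp only [Nat.zero_sub, sub_self, add_zero]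
      have : ∀ i : ℕ, x (i+1) - x ((i+1)-1) = x (i+1) - x i := by
        intro i; congr 2
      rw [Finset.sum_congr rfl (fun i _ => this i), Finset.sum_range_sub, hx0, sub_zero]
    rw [hfdef]
    simp only
    rw [Finset.sum_sub_distrib, ← Finset.mul_sum, ht]
  set S : ℕ → ℝ := fun n => ∑ i ∈ range (n+1), x i with hSdef
  have hST : (fun n => S n - (d / (d-1)) * x n) =o[atTop] S := by
    have := (hfo.sum_range hxnonneg htop).comp_tendsto (tendsto_add_atTop_nat 1)
    refine IsLittleO.congr' this ?_ (by rfl)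
    exact Eventually.of_forall fun n => key1 n
  -- b = fun n => n * a n is equivalent to x
  have hb : IsEquivalent atTop (fun n : ℕ => (n:ℝ) * a n) x := by
    have := (IsEquivalent.refl (u := fun n : ℕ => (n:ℝ))).mul ha
    refine this.congr_right (Eventually.of_forall fun n => ?_)
    show (n:ℝ) * (c * d ^ n * ((n:ℝ))^(-(3/2:ℝ))) = x n
    have key : (n:ℝ) * ((n:ℝ))^(-(3/2:ℝ)) = ((n:ℝ))^(-(1/2:ℝ)) := by
      rw [← Real.rpow_one_add' (Nat.cast_nonneg n) (by norm_num : (1:ℝ) + -(3/2) ≠ 0)]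
      norm_num
    rw [hxdef]
    calc (n:ℝ) * (c * d ^ n * ((n:ℝ))^(-(3/2:ℝ)))
        = c * d ^ n * ((n:ℝ) * ((n:ℝ))^(-(3/2:ℝ))) := by ring
      _ = c * d ^ n * ((n:ℝ))^(-(1/2:ℝ)) := by rw [key]
  have hbo : (fun n : ℕ => (n:ℝ) * a n - x n) =o[atTop] x := hb.isLittleO
  have hUS : (fun n : ℕ => (∑ i ∈ Finset.Icc 1 n, (i:ℝ) * a i) - S n) =o[atTop] S := by
    have := (hbo.sum_range hxnonneg htop).comp_tendsto (tendsto_add_atTop_nat 1)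
    refine IsLittleO.congr' this ?_ (by rfl)
    refine Eventually.of_forall fun n => ?_
    show ∑ i ∈ range (n+1), ((i:ℝ) * a i - x i) = _
    rw [Finset.sum_sub_distrib]
    congr 1
    rw [Finset.range_eq_Ico, Finset.sum_eq_sum_Ico_succ_bot (by omega),
      Finset.Ico_add_one_right_eq_Icc]
    simp
  -- S is equivalent to (d/(d-1)) * x
  have hSx : IsEquivalent atTop S (fun n => (d / (d-1)) * x n) := by
    have : (fun n => (d / (d-1)) * x n - S n) =o[atTop] S := by
      refine (hST.neg_left).congr' (Eventually.of_forall fun n => by ring) (by rfl)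
    exact (IsEquivalent.symm this)
  have hSO : S =O[atTop] (fun n => (d / (d-1)) * x n) := hSx.isBigO
  -- conclude
  have hUT : (fun n : ℕ => (∑ i ∈ Finset.Icc 1 n, (i:ℝ) * a i) - (d / (d-1)) * x n)
      =o[atTop] (fun n => (d / (d-1)) * x n) := by
    have h := (hUS.add hST).trans_isBigO hSO
    refine h.congr' (Eventually.of_forall fun n => by ring) (by rfl)
  have final : IsEquivalent atTop (fun n : ℕ => ∑ i ∈ Finset.Icc 1 n, (i:ℝ) * a i)
      (fun n => (d / (d-1)) * x n) := hUT
  refine final.congr_right (Eventually.of_forall fun n => ?_)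
  rw [hxdef]; ring
end

section
/- Let (a_n) be a real sequence and let c > 0 and d > 1 be real constants such that a_n is asymptotically equivalent to c · d^n · n^(−3/2) as n → ∞, and additionally a_n ≥ 1 for all n ≥ 1. Define b_n = ∑_{i=1}^{n} a_i. Then the sequence n ↦ b_{n+1} · (ln b_{n+1} + ln ln b_{n+1}) is asymptotically equivalent to c · (d/(d−1)) · d^(n+1) · (n+1)^(−1/2) · ln d as n → ∞. -/
open Filter Finset Real Asymptotics Topology

lemma sum_Icc_eq_sum_range_succ (h : ℕ → ℝ) (h0 : h 0 = 0) (n : ℕ) :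
    ∑ i ∈ Finset.Icc 1 n, h i = ∑ i ∈ Finset.range (n+1), h i := by
  rw [Finset.range_eq_Ico, Finset.sum_eq_sum_Ico_succ_bot (by omega : 0 < n+1), h0, zero_add,
    ← Finset.Ico_add_one_right_eq_Icc]

lemma sum_Icc_isLittleO_aux {f g : ℕ → ℝ} (hf : f =o[atTop] g) (hf0 : f 0 = 0) (hg0 : g 0 = 0)
    (hg : ∀ n, 0 ≤ g n) (hgtop : Tendsto (fun n => ∑ i ∈ range n, g i) atTop atTop) :
    (fun n => ∑ i ∈ Finset.Icc 1 n, f i) =o[atTop] (fun n => ∑ i ∈ Finset.Icc 1 n, g i) := by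
  have := (hf.sum_range hg hgtop).comp_tendsto (tendsto_add_atTop_nat 1)
  refine this.congr' ?_ ?_
  · filter_upwards with n; exact (sum_Icc_eq_sum_range_succ f hf0 n).symm
  · filter_upwards with n; exact (sum_Icc_eq_sum_range_succ g hg0 n).symm

lemma partial_sum_equiv {a : ℕ → ℝ} {c d : ℝ} (hc : 0 < c) (hd : 1 < d)
    (ha : a ~[atTop] fun n => c * d ^ n * (n : ℝ) ^ (-(3 / 2 : ℝ))) :
    (fun n => ∑ i ∈ Finset.Icc 1 n, a i) ~[atTop]
      (fun n => (d / (d - 1)) * (c * d ^ n * (n : ℝ) ^ (-(3 / 2 : ℝ)))) := by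
  have hd0 : (0:ℝ) < d := lt_trans one_pos hd
  have hd1 : (0:ℝ) < d - 1 := by linarith
  set g : ℕ → ℝ := fun n => c * d ^ n * (n : ℝ) ^ (-(3 / 2 : ℝ)) with hgdef
  have g0 : g 0 = 0 := by
    simp [hgdef, Real.zero_rpow (by norm_num : (-(3/2:ℝ)) ≠ 0)]
  have gnonneg : ∀ n, 0 ≤ g n := by
    intro n; simp only [hgdef]; positivity
  have gpos : ∀ n, 1 ≤ n → 0 < g n := by
    intro n hn
    have h : (0:ℝ) < (n:ℝ) := by exact_mod_cast hn
    simp only [hgdef]; positivity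
  -- g tends to atTop
  have gtop : Tendsto g atTop atTop := by
    have h1 : Tendsto (fun n : ℕ => ((n:ℝ)) ^ (2:ℕ) / d ^ n) atTop (𝓝 0) :=
      tendsto_pow_const_div_const_pow_of_one_lt 2 hd
    have h2 : Tendsto (fun n : ℕ => d ^ n / ((n:ℝ)) ^ (2:ℕ)) atTop atTop := by
      have := Tendsto.inv_tendsto_nhdsGT_zero
        (tendsto_nhdsWithin_of_tendsto_nhds_of_eventually_within _ h1 ?_)
      · refine this.congr fun n => ?_
        simp [Pi.inv_apply, inv_div]
      · filter_upwards [eventually_ge_atTop 1] with n hn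
        have h : (0:ℝ) < (n:ℝ) := by exact_mod_cast hn
        have : (0:ℝ) < ((n:ℝ))^(2:ℕ) / d ^ n := by positivity
        exact this
    have h3 : Tendsto (fun n : ℕ => c * (d ^ n / ((n:ℝ)) ^ (2:ℕ))) atTop atTop :=
      h2.const_mul_atTop hc
    refine tendsto_atTop_mono' atTop ?_ h3
    filter_upwards [eventually_ge_atTop 1] with n hn
    have hn0 : (1:ℝ) ≤ (n:ℝ) := by exact_mod_cast hn
    have hpos : (0:ℝ) < (n:ℝ) := by linarith
    have key : ((n:ℝ)) ^ (-(2:ℝ)) ≤ ((n:ℝ)) ^ (-(3/2:ℝ)) :=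
      Real.rpow_le_rpow_of_exponent_le hn0 (by norm_num)
    have e2 : ((n:ℝ)) ^ (-(2:ℝ)) = (((n:ℝ)) ^ (2:ℕ))⁻¹ := by
      rw [Real.rpow_neg hpos.le, show ((2:ℝ)) = ((2:ℕ):ℝ) by norm_num, Real.rpow_natCast]
    calc c * (d ^ n / ((n:ℝ)) ^ (2:ℕ)) = c * d ^ n * ((n:ℝ)) ^ (-(2:ℝ)) := by
          rw [e2]; ring
      _ ≤ g n := by
          simp only [hgdef]
          have hcd : (0:ℝ) < c * d ^ n := by positivity
          nlinarith [key, hcd]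
  have sumgtop : Tendsto (fun n => ∑ i ∈ range n, g i) atTop atTop := by
    refine tendsto_atTop_mono' atTop ?_ (gtop.comp (tendsto_sub_atTop_nat 1))
    filter_upwards [eventually_ge_atTop 1] with n hn
    simp only [Function.comp_apply]
    exact Finset.single_le_sum (fun i _ => gnonneg i) (Finset.mem_range.2 (by omega))
  -- error terms
  set e : ℕ → ℝ := fun n => g n - (d / (d - 1)) * (g n - g (n - 1)) with hedef
  have e0 : e 0 = 0 := by simp [hedef, g0]
  -- ratio limit
  have hR : Tendsto (fun n => g n / g (n + 1)) atTop (𝓝 d⁻¹) := by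
    have h1 : Tendsto (fun n : ℕ => ((n:ℝ) / ((n:ℝ) + 1)) ^ (-(3/2:ℝ))) atTop (𝓝 1) := by
      have := (tendsto_natCast_div_add_atTop (1:ℝ)).rpow_const (p := -(3/2:ℝ))
        (Or.inl one_ne_zero)
      simpa using this
    have h2 := h1.const_mul d⁻¹
    rw [mul_one] at h2
    refine h2.congr' ?_
    filter_upwards [eventually_ge_atTop 1] with n hn
    have hn0 : (0:ℝ) < (n:ℝ) := by exact_mod_cast hn
    have hn1 : (0:ℝ) < (n:ℝ) + 1 := by linarith
    simp only [hgdef]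
    rw [Real.div_rpow hn0.le hn1.le]
    have hrp1 : (0:ℝ) < ((n:ℝ)) ^ (-(3/2:ℝ)) := Real.rpow_pos_of_pos hn0 _
    have hrp2 : (0:ℝ) < (((n:ℝ)) + 1) ^ (-(3/2:ℝ)) := Real.rpow_pos_of_pos hn1 _
    push_cast
    rw [pow_succ]
    field_simp
  have hR' : Tendsto (fun n => g (n - 1) / g n) atTop (𝓝 d⁻¹) := by
    refine (hR.comp (tendsto_sub_atTop_nat 1)).congr' ?_
    filter_upwards [eventually_ge_atTop 1] with n hn
    have h : n - 1 + 1 = n := by omega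
    simp only [Function.comp_apply, h]
  have he : e =o[atTop] g := by
    rw [isLittleO_iff_tendsto']
    · have lim : Tendsto (fun n => 1 - (d / (d - 1)) * (1 - g (n - 1) / g n)) atTop
          (𝓝 (1 - (d / (d - 1)) * (1 - d⁻¹))) :=
        tendsto_const_nhds.sub ((tendsto_const_nhds.sub hR').const_mul _)
      have hval : (1 : ℝ) - (d / (d - 1)) * (1 - d⁻¹) = 0 := by
        field_simp
        ring
      rw [hval] at lim
      refine lim.congr' ?_
      filter_upwards [eventually_ge_atTop 1] with n hn
      have hgn := (gpos n hn).ne'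
      simp only [hedef]
      field_simp
    · filter_upwards [eventually_ge_atTop 1] with n hn h
      exact absurd h (gpos n hn).ne'
  -- telescoping identity
  have idt : ∀ n, ∑ i ∈ Finset.Icc 1 n, g i
      = (d / (d - 1)) * g n + ∑ i ∈ Finset.Icc 1 n, e i := by
    intro n
    induction n with
    | zero => simp [g0]
    | succ n ih =>
        rw [Finset.sum_Icc_succ_top (by omega), Finset.sum_Icc_succ_top (by omega), ih]
        have h : e (n + 1) = g (n + 1) - (d / (d - 1)) * (g (n + 1) - g n) := by
          simp only [hedef, Nat.add_sub_cancel]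
        rw [h]; ring
  -- E = o(T)
  have ET := sum_Icc_isLittleO_aux he e0 g0 gnonneg sumgtop
  have Tphi : (fun n => ∑ i ∈ Finset.Icc 1 n, g i) ~[atTop]
      (fun n => (d / (d - 1)) * g n) := by
    refine (IsEquivalent.symm ?_)
    show ((fun n => (d / (d - 1)) * g n) - fun n => ∑ i ∈ Finset.Icc 1 n, g i)
      =o[atTop] (fun n => ∑ i ∈ Finset.Icc 1 n, g i)
    refine ET.neg_left.congr' ?_ (by rfl)
    filter_upwards with n
    have := idt n
    simp only [Pi.sub_apply]
    linarith
  -- b = o-close to T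
  have bT : (fun n => ∑ i ∈ Finset.Icc 1 n, a i) ~[atTop]
      (fun n => ∑ i ∈ Finset.Icc 1 n, g i) := by
    set f : ℕ → ℝ := fun n => if n = 0 then 0 else a n - g n with hfdef
    have hfo : f =o[atTop] g := by
      refine (ha.isLittleO).congr' ?_ (by rfl)
      filter_upwards [eventually_ge_atTop 1] with n hn
      simp only [hfdef, Pi.sub_apply, if_neg (by omega : ¬ n = 0)]
    have := sum_Icc_isLittleO_aux hfo (by simp [hfdef]) g0 gnonneg sumgtop
    show ((fun n => ∑ i ∈ Finset.Icc 1 n, a i) - fun n => ∑ i ∈ Finset.Icc 1 n, g i)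
      =o[atTop] (fun n => ∑ i ∈ Finset.Icc 1 n, g i)
    refine this.congr' ?_ (by rfl)
    filter_upwards with n
    simp only [Pi.sub_apply, ← Finset.sum_sub_distrib]
    refine (Finset.sum_congr rfl fun i hi => ?_)
    have : i ≠ 0 := by have := (Finset.mem_Icc.1 hi).1; omega
    simp [hfdef, this]
  exact bT.trans Tphi

set_option maxHeartbeats 1000000 in
theorem b_mul_log_isEquivalent
    (a : ℕ → ℝ) (c d : ℝ) (hc : 0 < c) (hd : 1 < d)
    (ha : Asymptotics.IsEquivalent atTop a
      (fun n => c * d ^ n * (n : ℝ) ^ (-(3 / 2 : ℝ))))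
    (ha1 : ∀ n ≥ 1, 1 ≤ a n)
    (b : ℕ → ℝ) (hb : ∀ n, b n = ∑ i ∈ Finset.Icc 1 n, a i) :
    Asymptotics.IsEquivalent atTop
      (fun n => b (n + 1) * (Real.log (b (n + 1)) + Real.log (Real.log (b (n + 1)))))
      (fun n => c * (d / (d - 1)) * d ^ (n + 1) * ((n : ℝ) + 1) ^ (-(1 / 2 : ℝ)) * Real.log d) := by
  have hd0 : (0:ℝ) < d := lt_trans one_pos hd
  have hd1 : (0:ℝ) < d - 1 := by linarith
  have hlogd : 0 < Real.log d := Real.log_pos hd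
  set φ : ℕ → ℝ := fun n => (d / (d - 1)) * (c * d ^ n * (n : ℝ) ^ (-(3 / 2 : ℝ))) with hφdef
  have hbφ : b ~[atTop] φ := by
    have := partial_sum_equiv hc hd ha
    have hbe : b = fun n => ∑ i ∈ Finset.Icc 1 n, a i := funext hb
    rw [hbe]; exact this
  -- composed with n+1
  have hB : (fun n => b (n + 1)) ~[atTop] (fun n => φ (n + 1)) :=
    hbφ.isLittleO.comp_tendsto (tendsto_add_atTop_nat 1)
  have hφpos : ∀ n : ℕ, 0 < φ (n + 1) := by
    intro n
    have : (0:ℝ) < ((n + 1 : ℕ) : ℝ) := by positivity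
    simp only [hφdef]; positivity
  -- lower bound for b (n+1)
  have hBlb : ∀ n : ℕ, ((n : ℝ) + 1) ≤ b (n + 1) := by
    intro n
    rw [hb]
    have := Finset.card_nsmul_le_sum (Finset.Icc 1 (n+1)) a 1
      (fun i hi => ha1 i (Finset.mem_Icc.1 hi).1)
    rw [Nat.card_Icc] at this
    simpa [nsmul_eq_mul] using this
  have hBpos : ∀ n : ℕ, 0 < b (n + 1) := fun n => lt_of_lt_of_le (by positivity) (hBlb n)
  set v : ℕ → ℝ := fun n => ((n : ℝ) + 1) * Real.log d with hvdef
  have hvpos : ∀ n, 0 < v n := by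
    intro n; simp only [hvdef]; positivity
  have hvtop : Tendsto v atTop atTop :=
    (tendsto_atTop_add_const_right _ 1 tendsto_natCast_atTop_atTop).atTop_mul_const hlogd
  have hnormv : Tendsto (fun n => ‖v n‖) atTop atTop := by
    refine hvtop.congr' ?_
    filter_upwards with n
    rw [Real.norm_eq_abs, abs_of_pos (hvpos n)]
  have hconst_o : ∀ K : ℝ, (fun _ : ℕ => K) =o[atTop] v := by
    intro K
    refine isLittleO_const_left.2 (Or.inr ?_)
    exact hnormv
  have hlogn_o : (fun n : ℕ => Real.log ((n : ℝ) + 1)) =o[atTop] v := by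
    have h1 : (fun n : ℕ => Real.log ((n : ℝ) + 1)) =o[atTop] (fun n : ℕ => (n : ℝ) + 1) :=
      Real.isLittleO_log_id_atTop.comp_tendsto
        (tendsto_atTop_add_const_right _ 1 tendsto_natCast_atTop_atTop)
    have := (isLittleO_const_mul_right_iff (c := Real.log d) hlogd.ne').2 h1
    refine this.congr_right ?_
    intro n; simp only [hvdef]; ring
  -- ratio tendsto 1
  have hr : Tendsto (fun n => b (n + 1) / φ (n + 1)) atTop (𝓝 1) := by
    have := (isEquivalent_iff_tendsto_one ?_).1 hB
    · exact this
    · filter_upwards with n; exact (hφpos n).ne'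
  have hlogr : Tendsto (fun n => Real.log (b (n + 1) / φ (n + 1))) atTop (𝓝 0) := by
    have := hr.log one_ne_zero
    simpa using this
  -- step 2a
  have hlog : (fun n => Real.log (b (n + 1))) ~[atTop] v := by
    show ((fun n => Real.log (b (n + 1))) - v) =o[atTop] v
    have hdecomp : ∀ n : ℕ, Real.log (b (n + 1))
        = v n + ((Real.log (d / (d - 1)) + Real.log c)
            + (-(3/2 : ℝ)) * Real.log ((n : ℝ) + 1)
            + Real.log (b (n + 1) / φ (n + 1))) := by
      intro n
      have hφn := hφpos n
      have hbn := hBpos n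
      have hrpos : 0 < b (n + 1) / φ (n + 1) := div_pos hbn hφn
      have hsplit : Real.log (b (n + 1) / φ (n + 1))
          = Real.log (b (n + 1)) - Real.log (φ (n + 1)) := Real.log_div hbn.ne' hφn.ne'
      have hcast : ((n + 1 : ℕ) : ℝ) = (n : ℝ) + 1 := by push_cast; ring
      have hφexp : Real.log (φ (n + 1))
          = Real.log (d / (d - 1)) + Real.log c + ((n : ℝ) + 1) * Real.log d
            + (-(3/2 : ℝ)) * Real.log ((n : ℝ) + 1) := by
        simp only [hφdef]
        rw [Real.log_mul (by positivity) (by positivity),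
          Real.log_mul (by positivity) (by positivity),
          Real.log_mul (by positivity) (by positivity)]
        rw [Real.log_pow, hcast, Real.log_rpow (by positivity)]
        push_cast
        ring
      rw [hsplit, hφexp]
      simp only [hvdef]
      ring
    have ho : (fun n : ℕ => (Real.log (d / (d - 1)) + Real.log c)
        + (-(3/2 : ℝ)) * Real.log ((n : ℝ) + 1)
        + Real.log (b (n + 1) / φ (n + 1))) =o[atTop] v := by
      refine ((hconst_o _).add (hlogn_o.const_mul_left _)).add ?_
      exact ((hlogr.isBigO_one ℝ).trans_isLittleO (hconst_o 1))
    refine ho.congr' ?_ (by rfl)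
    filter_upwards with n
    simp only [Pi.sub_apply]
    linarith [hdecomp n]
  -- step 2b
  have hloglog : (fun n => Real.log (Real.log (b (n + 1)))) =o[atTop] v := by
    set w : ℕ → ℝ := fun n => Real.log 2 + Real.log ((n : ℝ) + 1) + Real.log (Real.log d)
      with hwdef
    have hwo : w =o[atTop] v := by
      refine ((hconst_o _).add hlogn_o).add (hconst_o _)
    -- eventual bounds
    have hub : ∀ᶠ n in atTop, Real.log (b (n + 1)) ≤ 2 * v n := by
      have hratio : Tendsto (fun n => Real.log (b (n + 1)) / v n) atTop (𝓝 1) := by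
        have := (isEquivalent_iff_tendsto_one ?_).1 hlog
        · exact this
        · filter_upwards with n; exact (hvpos n).ne'
      filter_upwards [hratio.eventually (eventually_le_nhds (by norm_num : (1:ℝ) < 2))] with n hn
      have := hvpos n
      calc Real.log (b (n + 1)) = Real.log (b (n + 1)) / v n * v n := by field_simp
        _ ≤ 2 * v n := by nlinarith
    have hlb : ∀ᶠ n in atTop, 1 ≤ Real.log (b (n + 1)) := by
      filter_upwards [eventually_ge_atTop 2] with n hn
      have h3 : (3 : ℝ) ≤ b (n + 1) := by
        have := hBlb n
        have : (2:ℝ) ≤ (n:ℝ) := by exact_mod_cast hn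
        linarith [hBlb n]
      have he3 : Real.exp 1 ≤ 3 := by
        have := Real.exp_one_lt_d9
        norm_num at this ⊢
        linarith
      calc (1:ℝ) = Real.log (Real.exp 1) := (Real.log_exp 1).symm
        _ ≤ Real.log (b (n + 1)) := Real.log_le_log (Real.exp_pos 1) (by linarith)
    rw [isLittleO_iff] at hwo ⊢
    intro ε hε
    filter_upwards [hwo hε, hub, hlb, eventually_ge_atTop 1] with n h1 h2 h3 h4
    have hlogb_pos : 0 < Real.log (b (n + 1)) := by linarith
    have hll_nonneg : 0 ≤ Real.log (Real.log (b (n + 1))) :=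
      Real.log_nonneg h3
    have hll_ub : Real.log (Real.log (b (n + 1))) ≤ w n := by
      calc Real.log (Real.log (b (n + 1))) ≤ Real.log (2 * v n) :=
            Real.log_le_log hlogb_pos h2
        _ = w n := by
            simp only [hvdef, hwdef]
            rw [Real.log_mul (by norm_num) (by positivity),
              Real.log_mul (by positivity) hlogd.ne']
            ring
    have hw_nonneg : Real.log (Real.log (b (n + 1))) ≤ |w n| := le_trans hll_ub (le_abs_self _)
    rw [Real.norm_eq_abs, abs_of_nonneg hll_nonneg]
    calc Real.log (Real.log (b (n + 1))) ≤ |w n| := hw_nonneg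
      _ = ‖w n‖ := rfl
      _ ≤ ε * ‖v n‖ := h1
  -- combine
  have L : (fun n => Real.log (b (n + 1)) + Real.log (Real.log (b (n + 1)))) ~[atTop] v :=
    hlog.add_isLittleO hloglog
  have main := hB.mul L
  refine main.congr_right ?_
  filter_upwards with n
  have hx : (0:ℝ) < (n : ℝ) + 1 := by positivity
  have hcast : ((n + 1 : ℕ) : ℝ) = (n : ℝ) + 1 := by push_cast; ring
  have hrpow : ((n : ℝ) + 1) ^ (-(3/2 : ℝ)) * ((n : ℝ) + 1) = ((n : ℝ) + 1) ^ (-(1/2 : ℝ)) := by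
    nth_rewrite 2 [← Real.rpow_one ((n : ℝ) + 1)]
    rw [← Real.rpow_add hx]
    norm_num
  simp only [Pi.mul_apply, hφdef, hvdef, hcast]
  calc d / (d - 1) * (c * d ^ (n+1) * ((n : ℝ) + 1) ^ (-(3/2 : ℝ))) * (((n : ℝ) + 1) * Real.log d)
      = c * (d / (d - 1)) * d ^ (n+1) * (((n : ℝ) + 1) ^ (-(3/2 : ℝ)) * ((n : ℝ) + 1)) * Real.log d := by ring
    _ = c * (d / (d - 1)) * d ^ (n + 1) * ((n : ℝ) + 1) ^ (-(1 / 2 : ℝ)) * Real.log d := by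
        rw [hrpow]
end

section
/- Let (a_n) be a real sequence and let c > 0 and d > 1 be real constants such that a_n is asymptotically equivalent to c · d^n · n^(−3/2) as n → ∞, and additionally a_n ≥ 1 for all n ≥ 1. Define b_n = ∑_{i=1}^{n} a_i. Then the ratio (b_{n+1} · (ln b_{n+1} + ln ln b_{n+1})) / (∑_{i=1}^{n} i · a_i) converges to d · ln d as n → ∞. -/
open Filter Finset Real

lemma ratio_sum_tendsto (u : ℕ → ℝ) (hu : ∀ n, 1 ≤ n → 1 ≤ u n) {d : ℝ} (hd : 1 < d)
    (hr : Tendsto (fun n => u (n + 1) / u n) atTop (nhds d)) :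
    Tendsto (fun n => (∑ i ∈ Finset.Icc 1 n, u i) / u n) atTop (nhds (d / (d - 1))) := by
  have hd0 : (0:ℝ) < d := by linarith
  set r : ℝ := (1 + d) / 2 with hrdef
  have hr1 : 1 < r := by rw [hrdef]; linarith
  have hrd : r < d := by rw [hrdef]; linarith
  have hr0 : (0:ℝ) < r := by linarith
  -- get N with ratio ≥ r beyond N
  obtain ⟨N0, hN0⟩ : ∃ N, ∀ m ≥ N, r < u (m + 1) / u m := by
    have := hr.eventually (eventually_gt_nhds hrd)
    exact eventually_atTop.1 this
  set N : ℕ := max N0 1 with hNdef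
  have hN1 : 1 ≤ N := le_max_right _ _
  have hupos : ∀ m, 1 ≤ m → 0 < u m := fun m hm => lt_of_lt_of_le one_pos (hu m hm)
  have hstep : ∀ m ≥ N, r * u m ≤ u (m + 1) := by
    intro m hm
    have h1m : 1 ≤ m := le_trans hN1 hm
    have := hN0 m (le_trans (le_max_left _ _) hm)
    have hpos := hupos m h1m
    rw [lt_div_iff₀ hpos] at this
    linarith
  -- growth: for i ≥ N, r^j * u i ≤ u (i + j)
  have hgrow : ∀ i ≥ N, ∀ j, r ^ j * u i ≤ u (i + j) := by
    intro i hi j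
    induction j with
    | zero => simp
    | succ j ih =>
      have h1 : r * u (i + j) ≤ u (i + j + 1) := hstep _ (le_trans hi (Nat.le_add_right _ _))
      calc r ^ (j+1) * u i = r * (r ^ j * u i) := by ring
        _ ≤ r * u (i + j) := by nlinarith [hupos i (le_trans hN1 hi)]
        _ ≤ u (i + (j+1)) := by rw [← Nat.add_assoc]; exact h1
  set C : ℝ := ∑ i ∈ Finset.Icc 1 N, u i with hCdef
  have hC1 : 1 ≤ C := by
    rw [hCdef]
    calc (1:ℝ) ≤ u N := hu N hN1
      _ ≤ ∑ i ∈ Finset.Icc 1 N, u i := by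
          apply Finset.single_le_sum (f := u) (fun i hi => le_of_lt (hupos i (Finset.mem_Icc.1 hi).1))
          simp [Finset.mem_Icc, hN1]
  have hCmem : ∀ i, 1 ≤ i → i ≤ N → u i ≤ C := by
    intro i h1 h2
    rw [hCdef]
    apply Finset.single_le_sum (f := u) (fun j hj => le_of_lt (hupos j (Finset.mem_Icc.1 hj).1))
    simp [Finset.mem_Icc, h1, h2]
  -- Tannery setup
  set f : ℕ → ℕ → ℝ := fun n k => if k < n then u (n - k) / u n else 0 with hfdef
  have htsum : ∀ n, 1 ≤ n → (∑ i ∈ Finset.Icc 1 n, u i) / u n = ∑' k, f n k := by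
    intro n hn
    have : ∑' k, f n k = ∑ k ∈ Finset.range n, f n k := by
      apply tsum_eq_sum
      intro k hk
      simp only [Finset.mem_range, not_lt] at hk
      simp [hfdef, Nat.not_lt.2 hk]
    rw [this]
    have h2 : ∑ k ∈ Finset.range n, f n k = (∑ k ∈ Finset.range n, u (n - k)) / u n := by
      rw [Finset.sum_div]
      apply Finset.sum_congr rfl
      intro k hk
      simp [hfdef, Finset.mem_range.1 hk]
    rw [h2]
    congr 1
    rw [← Finset.Ico_add_one_right_eq_Icc, Finset.sum_Ico_eq_sum_range]
    norm_num
    rw [← Finset.sum_range_reflect (fun j => u (1 + j)) n]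
    apply Finset.sum_congr rfl
    intro j hj
    have hj' := Finset.mem_range.1 hj
    congr 1
    omega
  -- pointwise limits
  have hpt : ∀ k, Tendsto (fun n => f n k) atTop (nhds ((1 / d) ^ k)) := by
    intro k
    induction k with
    | zero =>
      apply Tendsto.congr' ?_ tendsto_const_nhds
      filter_upwards [eventually_ge_atTop 1] with n hn
      simp [hfdef, Nat.lt_of_lt_of_le Nat.zero_lt_one hn,
        div_self (ne_of_gt (hupos n hn))]
    | succ k ih =>
      have hcomp : Tendsto (fun n : ℕ => u (n - (k + 1)) / u (n - k)) atTop (nhds (1 / d)) := by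
        have hinv : Tendsto (fun n => u n / u (n + 1)) atTop (nhds (1 / d)) := by
          have := hr.inv₀ (ne_of_gt hd0)
          simp only [one_div]
          apply this.congr
          intro n
          rw [inv_div]
        have := hinv.comp (tendsto_sub_atTop_nat (k + 1))
        apply this.congr'
        filter_upwards [eventually_ge_atTop (k + 1)] with n hn
        simp only [Function.comp_apply]
        congr 2
        omega
      have hmul := hcomp.mul ih
      rw [show (1 / d) * (1 / d) ^ k = (1 / d) ^ (k + 1) by ring] at hmul
      apply hmul.congr'
      filter_upwards [eventually_ge_atTop (k + 2)] with n hn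
      have h1 : k + 1 < n := by omega
      have h2 : k < n := by omega
      simp only [hfdef, if_pos h1, if_pos h2]
      rw [div_mul_div_comm]
      have hnk1 : 1 ≤ n - k := by omega
      have hne : u (n - k) ≠ 0 := ne_of_gt (hupos _ hnk1)
      have hne2 : u n ≠ 0 := ne_of_gt (hupos _ (by omega))
      field_simp
  have hCpos : (0:ℝ) < C := lt_of_lt_of_le one_pos hC1
  have hM : (1:ℝ) ≤ C * r ^ N := by nlinarith [one_le_pow₀ (le_of_lt hr1) (n := N)]
  -- domination
  have hbound : ∀ᶠ n in atTop, ∀ k, ‖f n k‖ ≤ (C * r ^ N) * (1 / r) ^ k := by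
    filter_upwards [eventually_ge_atTop N] with n hn
    intro k
    have hbnd_nonneg : (0:ℝ) ≤ (C * r ^ N) * (1 / r) ^ k :=
      mul_nonneg (mul_nonneg hCpos.le (pow_nonneg hr0.le N)) (pow_nonneg (by positivity) k)
    by_cases hk : k < n
    · have h1n : 1 ≤ n := by omega
      have h1i : 1 ≤ n - k := by omega
      have hfp : (0:ℝ) ≤ f n k := by
        simp only [hfdef, if_pos hk]
        exact div_nonneg (hupos _ h1i).le (hupos _ h1n).le
      rw [Real.norm_of_nonneg hfp]
      simp only [hfdef, if_pos hk]
      rw [div_le_iff₀ (hupos _ h1n)]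
      rcases le_or_gt N (n - k) with hNi | hNi
      · have hun : r ^ k * u (n - k) ≤ u n := by
          have h := hgrow (n - k) hNi k
          have e : n - k + k = n := by omega
          rwa [e] at h
        have hst : (1/r) ^ k * (r ^ k * u (n - k)) = u (n - k) := by
          rw [div_pow, one_pow]
          field_simp
        have hst2 : (1/r) ^ k * (r ^ k * u (n - k)) ≤ (1/r) ^ k * u n :=
          mul_le_mul_of_nonneg_left hun (by positivity)
        rw [hst] at hst2
        calc u (n - k) ≤ (1/r) ^ k * u n := hst2
          _ ≤ (C * r ^ N) * ((1/r) ^ k * u n) :=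
              le_mul_of_one_le_left (mul_nonneg (by positivity) (hupos _ h1n).le) hM
          _ = (C * r ^ N) * (1/r) ^ k * u n := by ring
      · have hgN := hgrow N le_rfl (n - N)
        rw [Nat.add_sub_cancel' hn] at hgN
        have hun : r ^ (n - N) ≤ u n := by
          nlinarith [hu N hN1, pow_pos hr0 (n - N)]
        have huiC : u (n - k) ≤ C := hCmem _ h1i (le_of_lt hNi)
        have hkey : r ^ N * (1/r) ^ k * r ^ (n - N) = r ^ (n - k) := by
          have hrne : r ≠ 0 := ne_of_gt hr0
          rw [one_div_pow, mul_one_div, div_mul_eq_mul_div, div_eq_iff (pow_ne_zero _ hrne)]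
          rw [← pow_add, ← pow_add]
          congr 1
          omega
        have hone : (1:ℝ) ≤ r ^ (n - k) := one_le_pow₀ (le_of_lt hr1)
        calc u (n - k) ≤ C := huiC
          _ ≤ C * r ^ (n - k) := le_mul_of_one_le_right hCpos.le hone
          _ = C * (r ^ N * (1/r) ^ k * r ^ (n - N)) := by rw [hkey]
          _ = (C * r ^ N) * (1/r) ^ k * r ^ (n - N) := by ring
          _ ≤ (C * r ^ N) * (1/r) ^ k * u n := by
              apply mul_le_mul_of_nonneg_left hun
              exact mul_nonneg (mul_nonneg hCpos.le (by positivity)) (by positivity)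
    · simp only [hfdef, if_neg hk, norm_zero]
      exact hbnd_nonneg
  have hsummable : Summable (fun k : ℕ => (C * r ^ N) * (1 / r) ^ k) := by
    apply Summable.mul_left
    exact summable_geometric_of_lt_one (by positivity) (by rw [div_lt_one hr0]; exact hr1)
  have hT := tendsto_tsum_of_dominated_convergence hsummable hpt hbound
  have hsum : ∑' k : ℕ, (1/d) ^ k = d / (d - 1) := by
    rw [tsum_geometric_of_lt_one (by positivity) (by rw [div_lt_one hd0]; exact hd)]
    have h1 : (1:ℝ) - 1/d = (d - 1)/d := by field_simp
    rw [h1, inv_div]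
  rw [hsum] at hT
  apply hT.congr'
  filter_upwards [eventually_ge_atTop 1] with n hn
  exact (htsum n hn).symm

theorem ratio_tendsto_d_mul_log_d
    (a : ℕ → ℝ) (c d : ℝ) (hc : 0 < c) (hd : 1 < d)
    (ha : Asymptotics.IsEquivalent atTop a
      (fun n => c * d ^ n * (n : ℝ) ^ (-(3 / 2 : ℝ))))
    (ha1 : ∀ n ≥ 1, 1 ≤ a n)
    (b : ℕ → ℝ) (hb : ∀ n, b n = ∑ i ∈ Finset.Icc 1 n, a i) :
    Filter.Tendsto
      (fun n => b (n + 1) * (Real.log (b (n + 1)) + Real.log (Real.log (b (n + 1)))) /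
        (∑ i ∈ Finset.Icc 1 n, (i : ℝ) * a i))
      atTop (nhds (d * Real.log d)) := by
  have hd0 : (0:ℝ) < d := by linarith
  set g : ℕ → ℝ := fun n => c * d ^ n * (n : ℝ) ^ (-(3 / 2 : ℝ)) with hgdef
  have hgpos : ∀ n : ℕ, 1 ≤ n → 0 < g n := by
    intro n hn
    have : (0:ℝ) < (n:ℝ) := by exact_mod_cast hn
    exact mul_pos (mul_pos hc (pow_pos hd0 n)) (Real.rpow_pos_of_pos this _)
  have hapos : ∀ n : ℕ, 1 ≤ n → 0 < a n := fun n hn => lt_of_lt_of_le one_pos (ha1 n hn)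
  -- a / g → 1
  have hadivg : Tendsto (fun n => a n / g n) atTop (nhds 1) := by
    have := (Asymptotics.isEquivalent_iff_tendsto_one ?_).1 ha
    · exact this
    · filter_upwards [eventually_ge_atTop 1] with n hn
      exact ne_of_gt (hgpos n hn)
  have hgdiva : Tendsto (fun n => g n / a n) atTop (nhds 1) := by
    have := hadivg.inv₀ one_ne_zero
    simp only [inv_one] at this
    apply this.congr'
    filter_upwards [eventually_ge_atTop 1] with n hn
    rw [inv_div]
  -- (n+1)/n → 1 and its rpow
  have hnn : Tendsto (fun n : ℕ => ((n:ℝ) + 1) / n) atTop (nhds 1) := by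
    have h0 : Tendsto (fun n : ℕ => 1 + 1 / (n:ℝ)) atTop (nhds 1) := by
      have := tendsto_one_div_atTop_nhds_zero_nat (𝕜 := ℝ)
      simpa using tendsto_const_nhds.add this
    apply h0.congr'
    filter_upwards [eventually_ge_atTop 1] with n hn
    have : (n:ℝ) ≠ 0 := by positivity
    field_simp
  have hnnr : Tendsto (fun n : ℕ => (((n:ℝ) + 1) / n) ^ (-(3 / 2 : ℝ))) atTop (nhds 1) := by
    have := hnn.rpow_const (p := -(3/2 : ℝ)) (Or.inl one_ne_zero)
    simpa using this
  -- g (n+1) / g n → d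
  have hratio_g : Tendsto (fun n => g (n + 1) / g n) atTop (nhds d) := by
    have hm := hnnr.const_mul d
    rw [mul_one] at hm
    apply hm.congr'
    filter_upwards [eventually_ge_atTop 1] with n hn
    have hn0 : (0:ℝ) < (n:ℝ) := by exact_mod_cast hn
    have hn1 : (0:ℝ) ≤ (n:ℝ) + 1 := by positivity
    rw [hgdef]
    simp only []
    rw [Real.div_rpow hn1 hn0.le]
    push_cast
    rw [pow_succ]
    have h1 : ((n:ℝ)) ^ (-(3 / 2 : ℝ)) ≠ 0 := ne_of_gt (Real.rpow_pos_of_pos hn0 _)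
    field_simp
  -- a (n+1) / a n → d
  have hratio_a : Tendsto (fun n => a (n + 1) / a n) atTop (nhds d) := by
    have h1 : Tendsto (fun n => a (n + 1) / g (n + 1)) atTop (nhds 1) :=
      hadivg.comp (tendsto_add_atTop_nat 1)
    have := (h1.mul hratio_g).mul hgdiva
    rw [one_mul, mul_one] at this
    apply this.congr'
    filter_upwards [eventually_ge_atTop 1] with n hn
    have hg1 : g (n + 1) ≠ 0 := ne_of_gt (hgpos _ (by omega))
    have hg2 : g n ≠ 0 := ne_of_gt (hgpos _ hn)
    field_simp
  -- b n / a n → d/(d-1)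
  have hba : Tendsto (fun n => b n / a n) atTop (nhds (d / (d - 1))) := by
    have := ratio_sum_tendsto a ha1 hd hratio_a
    apply this.congr
    intro n
    rw [hb]
  have hba1 : Tendsto (fun n => b (n + 1) / a (n + 1)) atTop (nhds (d / (d - 1))) :=
    hba.comp (tendsto_add_atTop_nat 1)
  -- S n / (n * a n) → d/(d-1)
  have hu' : ∀ n : ℕ, 1 ≤ n → 1 ≤ (n:ℝ) * a n := by
    intro n hn
    have h1 : (1:ℝ) ≤ (n:ℝ) := by exact_mod_cast hn
    nlinarith [ha1 n hn]
  have hratio_u : Tendsto (fun n : ℕ => ((n:ℝ) + 1) * a (n + 1) / ((n:ℝ) * a n)) atTop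
      (nhds d) := by
    have := hnn.mul hratio_a
    rw [one_mul] at this
    apply this.congr'
    filter_upwards [eventually_ge_atTop 1] with n hn
    have hn0 : ((n:ℝ)) ≠ 0 := by positivity
    have ha0 : a n ≠ 0 := ne_of_gt (hapos n hn)
    field_simp
  have hS : Tendsto (fun n : ℕ => (∑ i ∈ Finset.Icc 1 n, (i:ℝ) * a i) / ((n:ℝ) * a n)) atTop
      (nhds (d / (d - 1))) := by
    have := ratio_sum_tendsto (fun n => (n:ℝ) * a n) hu' hd ?_
    · exact this
    · apply hratio_u.congr
      intro n
      push_cast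
      ring_nf
  have hSinv : Tendsto (fun n : ℕ => ((n:ℝ) * a n) / (∑ i ∈ Finset.Icc 1 n, (i:ℝ) * a i)) atTop
      (nhds ((d - 1) / d)) := by
    have hne : d / (d - 1) ≠ 0 := by
      apply div_ne_zero <;> intro h <;> nlinarith
    have := hS.inv₀ hne
    rw [show (d / (d-1))⁻¹ = (d-1)/d by rw [inv_div]] at this
    apply this.congr
    intro n
    rw [inv_div]
  -- psi
  have hpsi : Tendsto (fun n : ℕ => b (n + 1) / (d ^ n * (n:ℝ) ^ (-(3 / 2 : ℝ)))) atTop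
      (nhds (c * d * (d / (d - 1)))) := by
    have h1 : Tendsto (fun n => a (n + 1) / g (n + 1)) atTop (nhds 1) :=
      hadivg.comp (tendsto_add_atTop_nat 1)
    have h3 : Tendsto (fun n : ℕ => g (n + 1) / (d ^ n * (n:ℝ) ^ (-(3 / 2 : ℝ)))) atTop
        (nhds (c * d)) := by
      have hm := hnnr.const_mul (c * d)
      rw [mul_one] at hm
      apply hm.congr'
      filter_upwards [eventually_ge_atTop 1] with n hn
      have hn0 : (0:ℝ) < (n:ℝ) := by exact_mod_cast hn
      rw [hgdef]
      simp only []
      rw [Real.div_rpow (by positivity) hn0.le]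
      push_cast
      rw [pow_succ]
      have h1 : ((n:ℝ)) ^ (-(3 / 2 : ℝ)) ≠ 0 := ne_of_gt (Real.rpow_pos_of_pos hn0 _)
      field_simp
    have := (hba1.mul h1).mul h3
    rw [mul_one] at this
    rw [show d / (d - 1) * (c * d) = c * d * (d / (d-1)) by ring] at this
    apply this.congr'
    filter_upwards [eventually_ge_atTop 1] with n hn
    have ha0 : a (n + 1) ≠ 0 := ne_of_gt (hapos _ (by omega))
    have hg0 : g (n + 1) ≠ 0 := ne_of_gt (hgpos _ (by omega))
    field_simp
  -- positivity of b and S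
  have hbpos : ∀ m : ℕ, 1 ≤ m → 1 ≤ b m := by
    intro m hm
    rw [hb]
    calc (1:ℝ) ≤ a 1 := ha1 1 le_rfl
      _ ≤ ∑ i ∈ Finset.Icc 1 m, a i := by
        apply Finset.single_le_sum (f := a)
          (fun i hi => (hapos i (Finset.mem_Icc.1 hi).1).le)
        simp [Finset.mem_Icc, hm]
  have hSpos : ∀ n : ℕ, 1 ≤ n → 1 ≤ ∑ i ∈ Finset.Icc 1 n, (i:ℝ) * a i := by
    intro n hn
    calc (1:ℝ) ≤ (1:ℕ) * a 1 := by simpa using ha1 1 le_rfl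
      _ ≤ ∑ i ∈ Finset.Icc 1 n, (i:ℝ) * a i := by
        apply Finset.single_le_sum (f := fun i : ℕ => (i:ℝ) * a i)
          (fun i hi => mul_nonneg (Nat.cast_nonneg _)
            (hapos i (Finset.mem_Icc.1 hi).1).le)
        simp [Finset.mem_Icc, hn]
  have hld : 0 < Real.log d := Real.log_pos hd
  have hlogn : Tendsto (fun n : ℕ => Real.log n / n) atTop (nhds 0) := by
    have h := Real.isLittleO_log_id_atTop.tendsto_div_nhds_zero
    exact h.comp tendsto_natCast_atTop_atTop
  -- log b (n+1) / n → log d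
  have hlog : Tendsto (fun n : ℕ => Real.log (b (n + 1)) / n) atTop (nhds (Real.log d)) := by
    have hL0 : c * d * (d / (d - 1)) ≠ 0 := by
      have : (0:ℝ) < d / (d - 1) := div_pos hd0 (by linarith)
      positivity
    have hψlog := hpsi.log hL0
    have h0 : Tendsto (fun n : ℕ =>
        Real.log (b (n + 1) / (d ^ n * (n:ℝ) ^ (-(3 / 2 : ℝ)))) / n) atTop (nhds 0) :=
      hψlog.div_atTop tendsto_natCast_atTop_atTop
    have hcomb := (h0.add (tendsto_const_nhds (α := ℕ) (x := Real.log d))).add (hlogn.const_mul (-(3/2 : ℝ)))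
    rw [zero_add, mul_zero, add_zero] at hcomb
    apply hcomb.congr'
    filter_upwards [eventually_ge_atTop 1] with n hn
    have hn0 : (0:ℝ) < (n:ℝ) := by exact_mod_cast hn
    have hrp : (0:ℝ) < (n:ℝ) ^ (-(3 / 2 : ℝ)) := Real.rpow_pos_of_pos hn0 _
    have hden : (0:ℝ) < d ^ n * (n:ℝ) ^ (-(3 / 2 : ℝ)) := by positivity
    have hbp : (0:ℝ) < b (n + 1) := lt_of_lt_of_le one_pos (hbpos _ (by omega))
    have hsplit : Real.log (b (n + 1)) =
        Real.log (b (n + 1) / (d ^ n * (n:ℝ) ^ (-(3 / 2 : ℝ))))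
          + (n:ℝ) * Real.log d + (-(3/2 : ℝ)) * Real.log n := by
      rw [Real.log_div (ne_of_gt hbp) (ne_of_gt hden),
        Real.log_mul (by positivity) (ne_of_gt hrp), Real.log_pow,
        Real.log_rpow hn0]
      push_cast
      ring
    rw [hsplit]
    field_simp
  -- log b (n+1) → ∞
  have hlogtop : Tendsto (fun n : ℕ => Real.log (b (n + 1))) atTop atTop := by
    apply tendsto_atTop_mono' atTop
      (show ∀ᶠ n : ℕ in atTop, (Real.log d / 2) * n ≤ Real.log (b (n + 1)) from ?_)
    · exact (tendsto_natCast_atTop_atTop (R := ℝ)).const_mul_atTop (half_pos hld)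
    · have hev := hlog.eventually (eventually_gt_nhds (show Real.log d / 2 < Real.log d by linarith))
      filter_upwards [hev, eventually_ge_atTop 1] with n h1 h2
      have hn0 : (0:ℝ) < (n:ℝ) := by exact_mod_cast h2
      rw [lt_div_iff₀ hn0] at h1
      linarith
  -- log log b (n+1) / n → 0
  have hloglog : Tendsto (fun n : ℕ => Real.log (Real.log (b (n + 1))) / n)
      atTop (nhds 0) := by
    have hU : Tendsto (fun n : ℕ => (Real.log (2 * Real.log d) + Real.log n) / n)
        atTop (nhds 0) := by
      have := (tendsto_const_nhds.div_atTop (tendsto_natCast_atTop_atTop (R := ℝ))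
        (f := fun _ : ℕ => Real.log (2 * Real.log d))).add hlogn
      rw [add_zero] at this
      apply this.congr
      intro n
      rw [add_div]
    apply tendsto_of_tendsto_of_tendsto_of_le_of_le'
      (tendsto_const_nhds (X := ℝ) (f := atTop (α := ℕ))) hU
    · filter_upwards [hlogtop.eventually_ge_atTop 1, eventually_ge_atTop 1] with n h1 h2
      have hn0 : (0:ℝ) < (n:ℝ) := by exact_mod_cast h2
      have : 0 ≤ Real.log (Real.log (b (n + 1))) := by
        apply Real.log_nonneg h1
      positivity
    · have hev := hlog.eventually (eventually_lt_nhds (show Real.log d < 2 * Real.log d by linarith))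
      filter_upwards [hev, eventually_ge_atTop 1, hlogtop.eventually_ge_atTop 1]
        with n h1 h2 h3
      have hn0 : (0:ℝ) < (n:ℝ) := by exact_mod_cast h2
      rw [div_lt_iff₀ hn0] at h1
      have hlb : Real.log (Real.log (b (n + 1))) ≤
          Real.log (2 * Real.log d) + Real.log n := by
        rw [← Real.log_mul (by positivity) (ne_of_gt hn0)]
        apply Real.log_le_log (by linarith)
        linarith
      gcongr
  -- (log b + log log b)/n → log d
  have hLn : Tendsto (fun n : ℕ =>
      (Real.log (b (n + 1)) + Real.log (Real.log (b (n + 1)))) / n) atTop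
      (nhds (Real.log d)) := by
    have := hlog.add hloglog
    rw [add_zero] at this
    apply this.congr
    intro n
    rw [add_div]
  -- final assembly
  have hfin := ((hba1.mul hratio_a).mul hSinv).mul hLn
  have hlim : d / (d - 1) * d * ((d - 1) / d) * Real.log d = d * Real.log d := by
    have h1 : d - 1 ≠ 0 := by linarith
    have h2 : d ≠ 0 := by linarith
    field_simp
  rw [hlim] at hfin
  apply hfin.congr'
  filter_upwards [eventually_ge_atTop 1] with n hn
  have hn0 : ((n:ℝ)) ≠ 0 := by positivity
  have ha0 : a n ≠ 0 := ne_of_gt (hapos n hn)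
  have ha1' : a (n + 1) ≠ 0 := ne_of_gt (hapos _ (by omega))
  have hS0 : (∑ i ∈ Finset.Icc 1 n, (i:ℝ) * a i) ≠ 0 :=
    ne_of_gt (lt_of_lt_of_le one_pos (hSpos n hn))
  field_simp
end

section
/- Let (a_n)_{n≥1} be a sequence of positive integers and let c > 0 and d > 1 be real constants such that a_n is asymptotically equivalent to c · d^n · n^(−3/2) as n → ∞. Define b_n = ∑_{i=1}^{n} a_i (with b_0 = 0), and for every integer k ≥ 1 let n(k) be the unique nonnegative integer n with b_n < k ≤ b_{n+1}, and define t_k = 1 + ∑_{i=1}^{n(k)} i · a_i + (n(k)+1) · (k − b_{n(k)}). Then k · (ln k + ln ln k) = O(t_k) as k → ∞; that is, there exist a constant C > 0 and an integer K such that for all k ≥ K, k · (ln k + ln ln k) ≤ C · t_k. -/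
open Filter Finset Real

theorem k_log_k_bigO_t
    (a : ℕ → ℕ) (c d : ℝ) (hc : 0 < c) (hd : 1 < d)
    (hpos : ∀ n ≥ 1, 0 < a n)
    (ha : Asymptotics.IsEquivalent atTop (fun n => (a n : ℝ))
      (fun n => c * d ^ n * (n : ℝ) ^ (-(3 / 2 : ℝ))))
    (b : ℕ → ℕ) (hb : ∀ n, b n = ∑ i ∈ Finset.Icc 1 n, a i)
    (nk : ℕ → ℕ) (hnk : ∀ k ≥ 1, b (nk k) < k ∧ k ≤ b (nk k + 1))
    (t : ℕ → ℝ)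
    (ht : ∀ k ≥ 1, t k = 1 + (∑ i ∈ Finset.Icc 1 (nk k), (i : ℝ) * (a i : ℝ)) +
      ((nk k : ℝ) + 1) * ((k : ℝ) - (b (nk k) : ℝ))) :
    ∃ C > 0, ∃ K : ℕ, ∀ k ≥ K,
      (k : ℝ) * (Real.log k + Real.log (Real.log k)) ≤ C * t k := by
  have hd0 : (0:ℝ) < d := lt_trans one_pos hd
  have hL : 0 < Real.log d := Real.log_pos hd
  set L := Real.log d with hLdef
  clear_value L
  -- b is monotone
  have hbmono : Monotone b := by
    intro i j hij
    rw [hb, hb]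
    exact Finset.sum_le_sum_of_subset (Finset.Icc_subset_Icc_right hij)
  have hbIoc : ∀ n, b n = ∑ i ∈ Finset.Ioc 0 n, a i := by
    intro n; rw [hb, ← Finset.Icc_add_one_left_eq_Ioc]; rfl
  -- key combinatorial lower bound : t k ≥ m * (k - b m) for m ≤ nk k
  have key : ∀ k, 1 ≤ k → ∀ m, m ≤ nk k → (m:ℝ) * ((k:ℝ) - (b m:ℝ)) ≤ t k := by
    intro k hk m hm
    obtain ⟨h1, h2⟩ := hnk k hk
    rw [ht k hk]
    have hbn : (b (nk k):ℝ) - (b m:ℝ) = ∑ i ∈ Finset.Ioc m (nk k), (a i:ℝ) := by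
      have hcons := Finset.sum_Ioc_consecutive a (Nat.zero_le m) hm
      rw [hbIoc, hbIoc, ← hcons]
      push_cast
      ring
    have hsum : (m:ℝ) * ((b (nk k):ℝ) - (b m:ℝ))
        ≤ ∑ i ∈ Finset.Icc 1 (nk k), (i:ℝ)*(a i:ℝ) := by
      rw [hbn, Finset.mul_sum]
      have hsub : Finset.Ioc m (nk k) ⊆ Finset.Icc 1 (nk k) := by
        intro i hi
        simp only [Finset.mem_Ioc, Finset.mem_Icc] at *
        omega
      calc ∑ i ∈ Finset.Ioc m (nk k), (m:ℝ)*(a i:ℝ)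
          ≤ ∑ i ∈ Finset.Ioc m (nk k), (i:ℝ)*(a i:ℝ) := by
            apply Finset.sum_le_sum
            intro i hi
            have hmi : m ≤ i := le_of_lt (Finset.mem_Ioc.mp hi).1
            exact mul_le_mul_of_nonneg_right (by exact_mod_cast hmi) (by positivity)
        _ ≤ ∑ i ∈ Finset.Icc 1 (nk k), (i:ℝ)*(a i:ℝ) :=
            Finset.sum_le_sum_of_subset_of_nonneg hsub (fun i _ _ => by positivity)
    have hlast : (m:ℝ) * ((k:ℝ) - (b (nk k):ℝ))
        ≤ ((nk k:ℝ)+1) * ((k:ℝ) - (b (nk k):ℝ)) := by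
      apply mul_le_mul_of_nonneg_right
      · have : (m:ℝ) ≤ (nk k:ℝ) := by exact_mod_cast hm
        linarith
      · have : (b (nk k):ℝ) < (k:ℝ) := by exact_mod_cast h1
        linarith
    have hsplit : (m:ℝ) * ((k:ℝ) - (b m:ℝ))
        = (m:ℝ) * ((b (nk k):ℝ) - (b m:ℝ)) + (m:ℝ) * ((k:ℝ) - (b (nk k):ℝ)) := by ring
    linarith
  -- from the asymptotics: eventually a n ≤ C2 * d ^ n
  obtain ⟨C0, hC0⟩ := Asymptotics.isBigO_iff.mp ha.isBigO
  rw [eventually_atTop] at hC0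
  obtain ⟨N0, hN0⟩ := hC0
  set N := max N0 1 with hNdef
  set C2 := max C0 0 * c with hC2def
  have hC2nn : 0 ≤ C2 := mul_nonneg (le_max_right _ _) hc.le
  have hbound : ∀ n, N ≤ n → (a n : ℝ) ≤ C2 * d ^ n := by
    intro n hn
    have hn1 : 1 ≤ n := le_trans (le_max_right _ _) hn
    have hn0 : N0 ≤ n := le_trans (le_max_left _ _) hn
    have h := hN0 n hn0
    have hrpow : ((n:ℝ)) ^ (-(3 / 2 : ℝ)) ≤ 1 := by
      apply Real.rpow_le_one_of_one_le_of_nonpos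
      · exact_mod_cast hn1
      · norm_num
    have hrpow0 : (0:ℝ) < ((n:ℝ)) ^ (-(3 / 2 : ℝ)) := by
      apply Real.rpow_pos_of_pos
      exact_mod_cast Nat.lt_of_lt_of_le Nat.zero_lt_one hn1
    have hgnorm : ‖c * d ^ n * ((n:ℝ)) ^ (-(3 / 2 : ℝ))‖
        = c * d ^ n * ((n:ℝ)) ^ (-(3 / 2 : ℝ)) := by
      rw [Real.norm_eq_abs, abs_of_nonneg]
      positivity
    rw [Real.norm_eq_abs, Real.norm_eq_abs, abs_of_nonneg (by positivity : (0:ℝ) ≤ (a n:ℝ))] at h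
    rw [abs_of_nonneg (by positivity : (0:ℝ) ≤ c * d ^ n * ((n:ℝ)) ^ (-(3 / 2 : ℝ)))] at h
    have hC0max : C0 * (c * d ^ n * ((n:ℝ)) ^ (-(3 / 2 : ℝ)))
        ≤ max C0 0 * (c * d ^ n * ((n:ℝ)) ^ (-(3 / 2 : ℝ))) :=
      mul_le_mul_of_nonneg_right (le_max_left _ _) (by positivity)
    have hstep : max C0 0 * (c * d ^ n * ((n:ℝ)) ^ (-(3 / 2 : ℝ))) ≤ C2 * d ^ n := by
      rw [hC2def]
      have : c * d ^ n * ((n:ℝ)) ^ (-(3 / 2 : ℝ)) ≤ c * d ^ n := by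
        calc c * d ^ n * ((n:ℝ)) ^ (-(3 / 2 : ℝ))
            ≤ c * d ^ n * 1 := mul_le_mul_of_nonneg_left hrpow (by positivity)
          _ = c * d ^ n := mul_one _
      nlinarith [le_max_right C0 0]
    linarith
  -- uniform bound: b m ≤ K3 * d ^ m
  set K3 := max ((b N : ℝ) + C2 * d / (d-1)) 1 with hK3def
  have hK3one : (1:ℝ) ≤ K3 := le_max_right _ _
  have hK30 : (0:ℝ) < K3 := lt_of_lt_of_le one_pos hK3one
  have hbK : ∀ m, (b m : ℝ) ≤ K3 * d ^ m := by
    intro m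
    have hdm1 : (1:ℝ) ≤ d ^ m := one_le_pow₀ hd.le
    rcases le_or_gt m N with hmN | hmN
    · have h1 : (b m : ℝ) ≤ (b N : ℝ) := by exact_mod_cast hbmono hmN
      have h2 : (b N : ℝ) ≤ K3 := by
        have : (b N : ℝ) ≤ (b N : ℝ) + C2 * d / (d-1) := by
          have : 0 ≤ C2 * d / (d-1) := by
            apply div_nonneg (mul_nonneg hC2nn hd0.le)
            linarith
          linarith
        exact le_trans this (le_max_left _ _)
      nlinarith
    · have hsum : (b m : ℝ) = (b N : ℝ) + ∑ i ∈ Finset.Ioc N m, (a i : ℝ) := by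
        have hcons := Finset.sum_Ioc_consecutive a (Nat.zero_le N) hmN.le
        rw [hbIoc, hbIoc, ← hcons]
        push_cast
        ring
      have hsum2 : ∑ i ∈ Finset.Ioc N m, (a i : ℝ) ≤ C2 * ∑ i ∈ Finset.Ioc N m, d ^ i := by
        rw [Finset.mul_sum]
        apply Finset.sum_le_sum
        intro i hi
        exact hbound i (le_of_lt (Finset.mem_Ioc.mp hi).1)
      have hgeo : ∑ i ∈ Finset.Ioc N m, d ^ i ≤ d ^ (m+1) / (d-1) := by
        have hsub : Finset.Ioc N m ⊆ Finset.range (m+1) := by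
          intro i hi
          rw [Finset.mem_range]
          exact Nat.lt_succ_of_le (Finset.mem_Ioc.mp hi).2
        have h1 : ∑ i ∈ Finset.Ioc N m, d ^ i ≤ ∑ i ∈ Finset.range (m+1), d ^ i :=
          Finset.sum_le_sum_of_subset_of_nonneg hsub (fun i _ _ => by positivity)
        rw [geom_sum_eq (ne_of_gt hd)] at h1
        have : (d ^ (m+1) - 1) / (d-1) ≤ d ^ (m+1) / (d-1) := by
          apply div_le_div_of_nonneg_right ?_ (by linarith)
          · linarith
        linarith
      have hK3ge : (b N : ℝ) + C2 * d / (d-1) ≤ K3 := le_max_left _ _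
      have hfin : (b N : ℝ) + C2 * (d ^ (m+1) / (d-1)) ≤ K3 * d ^ m := by
        have e1 : C2 * (d ^ (m+1) / (d-1)) = (C2 * d / (d-1)) * d ^ m := by
          field_simp
          ring
        have hbNd : (b N : ℝ) ≤ (b N : ℝ) * d ^ m := by
          nlinarith [(Nat.cast_nonneg (b N) : (0:ℝ) ≤ (b N:ℝ)), hdm1]
        calc (b N : ℝ) + C2 * (d ^ (m+1) / (d-1))
            ≤ (b N : ℝ) * d ^ m + (C2 * d / (d-1)) * d ^ m := by rw [e1]; linarith
          _ = ((b N : ℝ) + C2 * d / (d-1)) * d ^ m := by ring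
          _ ≤ K3 * d ^ m := mul_le_mul_of_nonneg_right hK3ge (by positivity)
      have : C2 * ∑ i ∈ Finset.Ioc N m, d ^ i ≤ C2 * (d ^ (m+1) / (d-1)) :=
        mul_le_mul_of_nonneg_left hgeo hC2nn
      linarith
  clear_value K3
  clear hK3def
  -- conclusion
  refine ⟨16 * L, by positivity, ?_⟩
  have hev : ∀ᶠ k : ℕ in atTop,
      (k : ℝ) * (Real.log k + Real.log (Real.log k)) ≤ 16 * L * t k := by
    have htl : Tendsto (fun k : ℕ => Real.log k) atTop atTop :=
      Real.tendsto_log_atTop.comp tendsto_natCast_atTop_atTop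
    have h1 := htl.eventually_ge_atTop (4 * L)
    have h2 := htl.eventually_ge_atTop 1
    have h3 : ∀ᶠ k : ℕ in atTop, (2 * K3)^2 ≤ (k:ℝ) := by
      have := tendsto_natCast_atTop_atTop (R := ℝ)
      exact this.eventually_ge_atTop _
    filter_upwards [h1, h2, h3, eventually_ge_atTop 3] with k hk1 hk2 hk3 hk3'
    have hk1n : 1 ≤ k := by omega
    have hkR : (3:ℝ) ≤ (k:ℝ) := by exact_mod_cast hk3'
    have hkpos : (0:ℝ) < (k:ℝ) := by linarith
    have hlogpos : (0:ℝ) < Real.log k := lt_of_lt_of_le one_pos hk2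
    set m := ⌊Real.log k / (2*L)⌋₊ with hmdef
    have hx0 : (0:ℝ) ≤ Real.log k / (2*L) := by positivity
    have hm_le : (m:ℝ) ≤ Real.log k / (2*L) := Nat.floor_le hx0
    have hm_gt : Real.log k / (2*L) < (m:ℝ) + 1 := Nat.lt_floor_add_one _
    clear_value m
    clear hmdef
    have hquarter : (1:ℝ) ≤ Real.log k / (4*L) := by
      rw [le_div_iff₀ (by positivity)]
      linarith
    have heq2 : Real.log k / (2*L) = 2 * (Real.log k / (4*L)) := by
      field_simp
      ring
    have hm_lb : Real.log k / (4*L) ≤ (m:ℝ) := by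
      nlinarith
    -- d ^ m ≤ sqrt k
    have hsq : Real.sqrt k ≤ Real.sqrt k := le_refl _
    have hdm_sq : d ^ m ≤ Real.sqrt k := by
      have hdexp : d = Real.exp L := by rw [hLdef]; exact (Real.exp_log hd0).symm
      have h2m : d ^ (2*m) ≤ (k:ℝ) := by
        have : ((2*m : ℕ):ℝ) * L ≤ Real.log k := by
          push_cast
          have h' := (le_div_iff₀ (by positivity : (0:ℝ) < 2*L)).mp hm_le
          nlinarith
        calc d ^ (2*m) = Real.exp (((2*m:ℕ):ℝ) * L) := by
              rw [Real.exp_nat_mul, ← hdexp]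
          _ ≤ Real.exp (Real.log k) := Real.exp_le_exp.mpr this
          _ = (k:ℝ) := Real.exp_log hkpos
      have : (d ^ m)^2 ≤ (k:ℝ) := by
        rw [← pow_mul, mul_comm]
        exact h2m
      calc d ^ m = Real.sqrt ((d ^ m)^2) := (Real.sqrt_sq (by positivity)).symm
        _ ≤ Real.sqrt k := Real.sqrt_le_sqrt this
    -- b m ≤ k / 2
    have hsqk : Real.sqrt k * Real.sqrt k = (k:ℝ) := Real.mul_self_sqrt hkpos.le
    have hsqK3 : 2 * K3 ≤ Real.sqrt k := by
      rw [← Real.sqrt_sq (by positivity : (0:ℝ) ≤ 2 * K3)]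
      exact Real.sqrt_le_sqrt hk3
    have hbm_half : (b m : ℝ) ≤ (k:ℝ) / 2 := by
      have h1' : (b m : ℝ) ≤ K3 * Real.sqrt k :=
        le_trans (hbK m) (mul_le_mul_of_nonneg_left hdm_sq hK30.le)
      have h2' : K3 * Real.sqrt k ≤ (Real.sqrt k / 2) * Real.sqrt k :=
        mul_le_mul_of_nonneg_right (by linarith) (Real.sqrt_nonneg _)
      have h3' : (Real.sqrt k / 2) * Real.sqrt k = (k:ℝ)/2 := by
        rw [div_mul_eq_mul_div, hsqk]
      linarith
    -- m ≤ nk k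
    have hbmk : b m < k := by
      have : (b m : ℝ) < (k:ℝ) := by linarith
      exact_mod_cast this
    have hmnk : m ≤ nk k := by
      by_contra hcon
      push_neg at hcon
      have : nk k + 1 ≤ m := hcon
      have h := (hnk k hk1n).2
      have : b (nk k + 1) ≤ b m := hbmono this
      omega
    -- lower bound on t
    have hkey := key k hk1n m hmnk
    have hlow : Real.log k / (4*L) * ((k:ℝ)/2) ≤ t k := by
      have h1' : (k:ℝ)/2 ≤ (k:ℝ) - (b m:ℝ) := by linarith
      have h2' : Real.log k / (4*L) * ((k:ℝ)/2) ≤ (m:ℝ) * ((k:ℝ) - (b m:ℝ)) := by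
        apply mul_le_mul hm_lb h1' (by positivity)
        exact_mod_cast Nat.zero_le m
      linarith
    -- finish
    have hll : Real.log (Real.log k) ≤ Real.log k := Real.log_le_self hlogpos.le
    have hmain : (k:ℝ) * (Real.log k + Real.log (Real.log k)) ≤ 2 * (k:ℝ) * Real.log k := by
      have hstep : Real.log k + Real.log (Real.log k) ≤ 2 * Real.log k := by linarith
      calc (k:ℝ) * (Real.log k + Real.log (Real.log k))
          ≤ (k:ℝ) * (2 * Real.log k) := mul_le_mul_of_nonneg_left hstep hkpos.le
        _ = 2 * (k:ℝ) * Real.log k := by ring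
    have hid : 16 * L * (Real.log k / (4*L) * ((k:ℝ)/2)) = 2 * (k:ℝ) * Real.log k := by
      field_simp
      ring
    have : 16 * L * (Real.log k / (4*L) * ((k:ℝ)/2)) ≤ 16 * L * t k :=
      mul_le_mul_of_nonneg_left hlow (by positivity)
    linarith
  rw [eventually_atTop] at hev
  exact hev
end
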